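/- arXiv:1810.11122 — 4 statements merged into one kernel-verified Lean document; each statement's English description precedes it below -/
import Mathlib

section
/- Let c = \sum_{i=1}^m c_i and d = \sum_{i=1}^m d_i with 0 \le c_i \le d_i and 1 \le d_i for all i. Suppose |c/d - K| > \delta for some 0 \le \delta, K \le 1. Then there exists j \in \{1,...,m\} such that d_j \ge (\delta/(2m)) d and |c_j/d_j - K| \ge \delta/2. -/
open Finset

theorem stmt0 (m : ℕ) (hm : 0 < m) (c d : Fin m → ℝ)
    (hc0 : ∀ i, 0 ≤ c i) (hcd : ∀ i, c i ≤ d i) (hd1 : ∀ i, 1 ≤ d i)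
    (K δ : ℝ) (hδ0 : 0 ≤ δ) (hδ1 : δ ≤ 1) (hK0 : 0 ≤ K) (hK1 : K ≤ 1)
    (hdev : |(∑ i, c i) / (∑ i, d i) - K| > δ) :
    ∃ j : Fin m, (δ / (2 * m)) * (∑ i, d i) ≤ d j ∧ δ / 2 ≤ |c j / d j - K| := by
  have hdpos : ∀ i, (0:ℝ) < d i := fun i => lt_of_lt_of_le one_pos (hd1 i)
  have hDpos : (0:ℝ) < ∑ i, d i :=
    Finset.sum_pos (fun i _ => hdpos i) ⟨⟨0, hm⟩, mem_univ _⟩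
  rcases eq_or_lt_of_le hδ0 with h0 | hδpos
  · refine ⟨⟨0, hm⟩, ?_, ?_⟩
    · rw [← h0]; simpa using (hdpos _).le
    · rw [← h0]; simpa using abs_nonneg _
  -- main case: δ > 0
  have key : δ * (∑ i, d i) < |∑ i, c i - K * ∑ i, d i| := by
    have heq : (∑ i, c i) / (∑ i, d i) - K = (∑ i, c i - K * ∑ i, d i) / (∑ i, d i) := by
      field_simp
    rw [heq, abs_div, abs_of_pos hDpos, gt_iff_lt, lt_div_iff₀ hDpos] at hdev
    linarith [hdev]
  have h1 : ∑ i, c i - K * ∑ i, d i = ∑ i, d i * (c i / d i - K) := by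
    rw [Finset.mul_sum, ← Finset.sum_sub_distrib]
    refine Finset.sum_congr rfl fun i _ => ?_
    have hne := (hdpos i).ne'
    field_simp
  have habs1 : ∀ i, |c i / d i - K| ≤ 1 := by
    intro i
    have h01 : (0:ℝ) ≤ c i / d i := div_nonneg (hc0 i) (hdpos i).le
    have h02 : c i / d i ≤ 1 := (div_le_one (hdpos i)).mpr (hcd i)
    rw [abs_le]; constructor <;> linarith
  set A : Finset (Fin m) := univ.filter (fun i => δ / 2 ≤ |c i / d i - K|) with hA
  have hsplit : δ / 2 * (∑ i, d i) < ∑ i ∈ A, d i := by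
    have h2 : |∑ i, c i - K * ∑ i, d i| ≤ ∑ i, d i * |c i / d i - K| := by
      rw [h1]
      refine (Finset.abs_sum_le_sum_abs _ _).trans ?_
      refine Finset.sum_le_sum fun i _ => ?_
      rw [abs_mul, abs_of_pos (hdpos i)]
    have h3 : ∑ i, d i * |c i / d i - K|
        = ∑ i ∈ A, d i * |c i / d i - K| + ∑ i ∈ Aᶜ, d i * |c i / d i - K| :=
      (Finset.sum_add_sum_compl A _).symm
    have h4 : ∑ i ∈ A, d i * |c i / d i - K| ≤ ∑ i ∈ A, d i := by
      refine Finset.sum_le_sum fun i _ => ?_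
      calc d i * |c i / d i - K| ≤ d i * 1 :=
            mul_le_mul_of_nonneg_left (habs1 i) (hdpos i).le
        _ = d i := mul_one _
    have h5 : ∑ i ∈ Aᶜ, d i * |c i / d i - K| ≤ δ / 2 * ∑ i ∈ Aᶜ, d i := by
      rw [Finset.mul_sum]
      refine Finset.sum_le_sum fun i hi => ?_
      have : ¬ (δ / 2 ≤ |c i / d i - K|) := by
        simpa [hA] using (Finset.mem_compl.mp hi)
      rw [mul_comm (δ/2)]
      exact mul_le_mul_of_nonneg_left (le_of_not_ge this) (hdpos i).le
    have h6 : ∑ i ∈ Aᶜ, d i ≤ ∑ i, d i :=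
      Finset.sum_le_sum_of_subset_of_nonneg (Finset.subset_univ _)
        (fun i _ _ => (hdpos i).le)
    have h7 : δ / 2 * ∑ i ∈ Aᶜ, d i ≤ δ / 2 * ∑ i, d i :=
      mul_le_mul_of_nonneg_left h6 (by linarith)
    linarith
  have hAne : A.Nonempty := by
    by_contra h
    rw [Finset.not_nonempty_iff_eq_empty] at h
    rw [h, Finset.sum_empty] at hsplit
    nlinarith
  have hcard : (A.card : ℝ) ≤ m := by
    exact_mod_cast (Finset.card_le_card (Finset.subset_univ A)).trans (by simp)
  have hconst : ∑ _i ∈ A, (δ / (2 * m)) * (∑ i, d i) ≤ ∑ i ∈ A, d i := by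
    rw [Finset.sum_const, nsmul_eq_mul]
    have hmpos : (0:ℝ) < m := by exact_mod_cast hm
    have : (A.card : ℝ) * ((δ / (2 * m)) * (∑ i, d i)) ≤ (m : ℝ) * ((δ / (2 * m)) * (∑ i, d i)) := by
      refine mul_le_mul_of_nonneg_right hcard ?_
      positivity
    have heq2 : (m : ℝ) * ((δ / (2 * m)) * (∑ i, d i)) = δ / 2 * (∑ i, d i) := by
      field_simp
    linarith
  obtain ⟨j, hjA, hj⟩ := Finset.exists_le_of_sum_le hAne hconst
  refine ⟨j, hj, ?_⟩
  simpa [hA] using hjA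
end

section
/- Let \vartheta be an expanding primitive random substitution. There exist constants C, K > 0 such that for all letters a and all sufficiently large n, P[|\vartheta^n(a)| < K n] \le e^{-C n}. In particular, |\vartheta^n(a)| \to \infty almost surely for all a \in \mathcal{A}. -/
namespace RS

variable {A : Type*} [Fintype A] [DecidableEq A]

/-- One step of the random substitution applied to a (deterministic) word:
each letter is replaced independently and the results are concatenated. -/
noncomputable def stepPMF (ϑ : A → PMF (List A)) : List A → PMF (List A)
  | [] => PMF.pure []
  | a :: u => (ϑ a).bind fun w => (stepPMF ϑ u).map (w ++ ·)

/-- The Markov chain `ϑ^n(a)` started at the one-letter word `[a]`. -/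
noncomputable def iterPMF (ϑ : A → PMF (List A)) : ℕ → A → PMF (List A)
  | 0, a => PMF.pure [a]
  | n + 1, a => (iterPMF ϑ n a).bind (stepPMF ϑ)

/-- The mean substitution matrix `(M_ϑ)_{a b} = E[|ϑ(b)|_a]`. -/
noncomputable def meanMatrix (ϑ : A → PMF (List A)) : Matrix A A ℝ :=
  Matrix.of fun a b => ∑' w : List A, ((ϑ b) w).toReal * (w.count a)

/-- A random substitution is primitive if its mean matrix is primitive. -/
def Primitive (ϑ : A → PMF (List A)) : Prop :=
  ∃ k : ℕ, ∀ a b : A, 0 < ((meanMatrix ϑ) ^ k) a b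

/-- A random substitution is expanding if `P[|ϑ(a)| > 1] > 0` for some letter. -/
def Expanding (ϑ : A → PMF (List A)) : Prop :=
  ∃ a : A, 0 < (ϑ a).toOuterMeasure {w | 1 < w.length}

/-- A word is legal if it occurs as a subword of some realisation of some `ϑ^n(a)`. -/
def Legal (ϑ : A → PMF (List A)) (v : List A) : Prop :=
  ∃ (n : ℕ) (a : A) (w : List A), w ∈ (iterPMF ϑ n a).support ∧ v <:+: w

/-- The number of occurrences `|w|_v` of the word `v` as a subword of `w`. -/
def subCount (v w : List A) : ℕ :=
  (List.range w.length).countP fun i => (w.drop i).take v.length == v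



section Aux

set_option maxHeartbeats 1000000

open ENNReal

set_option linter.unusedSectionVars false

/-! ### Expectation over a PMF -/

noncomputable def Ef {α : Type*} (p : PMF α) (f : α → ℝ≥0∞) : ℝ≥0∞ := ∑' w, p w * f w

lemma Ef_pure {α : Type*} (u : α) (f : α → ℝ≥0∞) : Ef (PMF.pure u) f = f u := by
  unfold Ef
  rw [tsum_eq_single u]
  · simp
  · intro b hb; simp [PMF.pure_apply, if_neg hb]

lemma Ef_bind {α β : Type*} (p : PMF α) (q : α → PMF β) (f : β → ℝ≥0∞) :
    Ef (p.bind q) f = ∑' u, p u * Ef (q u) f := by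
  unfold Ef
  simp only [PMF.bind_apply]
  calc ∑' w, (∑' u, p u * q u w) * f w
      = ∑' w, ∑' u, p u * (q u w * f w) := by
        congr 1; ext w; rw [← ENNReal.tsum_mul_right]; congr 1; ext u; rw [mul_assoc]
    _ = ∑' u, ∑' w, p u * (q u w * f w) := ENNReal.tsum_comm
    _ = ∑' u, p u * ∑' w, q u w * f w := by
        congr 1; ext u; rw [ENNReal.tsum_mul_left]

lemma Ef_map {α β : Type*} (p : PMF α) (g : α → β) (f : β → ℝ≥0∞) :
    Ef (p.map g) f = Ef p (f ∘ g) := by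
  rw [PMF.map, Ef_bind]
  simp only [Ef, Function.comp]
  congr 1; ext u
  rw [show (∑' (w : β), (PMF.pure (g u)) w * f w) = Ef (PMF.pure (g u)) f from rfl, Ef_pure]

lemma Ef_le_Ef {α : Type*} (p : PMF α) (f g : α → ℝ≥0∞)
    (h : ∀ w ∈ p.support, f w ≤ g w) : Ef p f ≤ Ef p g := by
  apply ENNReal.tsum_le_tsum
  intro w
  by_cases hw : w ∈ p.support
  · exact mul_le_mul_right (h w hw) _
  · rw [(PMF.apply_eq_zero_iff p w).2 hw]; simp

lemma Ef_const {α : Type*} (p : PMF α) (c : ℝ≥0∞) : Ef p (fun _ => c) = c := by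
  unfold Ef; rw [ENNReal.tsum_mul_right, p.tsum_coe, one_mul]

lemma Ef_le_of_support {α : Type*} (p : PMF α) (f : α → ℝ≥0∞) (c : ℝ≥0∞)
    (h : ∀ w ∈ p.support, f w ≤ c) : Ef p f ≤ c := by
  calc Ef p f ≤ Ef p (fun _ => c) := Ef_le_Ef p f _ h
  _ = c := Ef_const p c

/-! ### step iterates -/

variable (ϑ : A → PMF (List A))

noncomputable def stepIter : ℕ → List A → PMF (List A)
  | 0, u => PMF.pure u
  | n + 1, u => (stepIter n u).bind (stepPMF ϑ)

lemma iterPMF_eq (n : ℕ) (a : A) : iterPMF ϑ n a = stepIter ϑ n [a] := by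
  induction n with
  | zero => rfl
  | succ n ih => simp only [iterPMF, stepIter, ih]

lemma stepIter_add (n m : ℕ) (u : List A) :
    stepIter ϑ (n + m) u = (stepIter ϑ n u).bind (stepIter ϑ m) := by
  induction m with
  | zero => simp only [Nat.add_zero]; exact (PMF.bind_pure _).symm
  | succ m ih =>
      show (stepIter ϑ (n + m) u).bind (stepPMF ϑ) = _
      rw [ih, PMF.bind_bind]
      rfl

lemma stepPMF_append (u v : List A) :
    stepPMF ϑ (u ++ v) = (stepPMF ϑ u).bind fun w1 => (stepPMF ϑ v).map (w1 ++ ·) := by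
  induction u with
  | nil =>
      show stepPMF ϑ v = (PMF.pure []).bind fun w1 => (stepPMF ϑ v).map (w1 ++ ·)
      rw [PMF.pure_bind]
      simp only [List.nil_append]
      exact (PMF.map_id _).symm
  | cons a u ih =>
      show (ϑ a).bind (fun w => (stepPMF ϑ (u ++ v)).map (w ++ ·)) = _
      rw [ih]
      show _ = ((ϑ a).bind fun w => (stepPMF ϑ u).map (w ++ ·)).bind
        fun w1 => (stepPMF ϑ v).map (w1 ++ ·)
      simp only [PMF.bind_bind, PMF.bind_map, PMF.map_bind, PMF.map_comp,
        Function.comp_def, List.append_assoc]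

lemma stepIter_append (m : ℕ) (u v : List A) :
    stepIter ϑ m (u ++ v) = (stepIter ϑ m u).bind fun w1 => (stepIter ϑ m v).map (w1 ++ ·) := by
  induction m with
  | zero =>
      show PMF.pure (u ++ v) = (PMF.pure u).bind fun w1 => (PMF.pure v).map (w1 ++ ·)
      rw [PMF.pure_bind, PMF.pure_map]
  | succ m ih =>
      show (stepIter ϑ m (u ++ v)).bind (stepPMF ϑ) = _
      rw [ih]
      show _ = ((stepIter ϑ m u).bind (stepPMF ϑ)).bind
        fun w1 => ((stepIter ϑ m v).bind (stepPMF ϑ)).map (w1 ++ ·)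
      simp only [PMF.bind_bind, PMF.bind_map, PMF.map_bind, PMF.map_comp, Function.comp_def]
      congr 1
      funext w1
      rw [show (fun x => stepPMF ϑ (w1 ++ x))
          = fun x => (stepPMF ϑ w1).bind fun z1 => (stepPMF ϑ x).map (z1 ++ ·) from
        funext fun x => stepPMF_append ϑ w1 x]
      rw [PMF.bind_comm (stepIter ϑ m v) (stepPMF ϑ w1)]

lemma stepIter_nil (m : ℕ) : stepIter ϑ m ([] : List A) = PMF.pure [] := by
  induction m with
  | zero => rfl
  | succ m ih =>
      show (stepIter ϑ m []).bind (stepPMF ϑ) = _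
      rw [ih, PMF.pure_bind]
      rfl

/-! ### Support lemmas -/

lemma mem_support_step (u : List A) (g : A → List A) (hg : ∀ a ∈ u, g a ∈ (ϑ a).support) :
    (u.map g).flatten ∈ (stepPMF ϑ u).support := by
  induction u with
  | nil => simp [stepPMF]
  | cons a u ih =>
      simp only [stepPMF, PMF.support_bind, PMF.support_map, Set.mem_iUnion]
      refine ⟨g a, hg a (by simp), ?_⟩
      exact ⟨(u.map g).flatten, ih (fun b hb => hg b (by simp [hb])), rfl⟩

lemma length_le_of_mem_support_step (hne : ∀ a : A, [] ∉ (ϑ a).support) (u : List A) :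
    ∀ w ∈ (stepPMF ϑ u).support, u.length ≤ w.length := by
  induction u with
  | nil => intro w hw; simp
  | cons a u ih =>
      intro w hw
      simp only [stepPMF, PMF.support_bind, PMF.support_map, Set.mem_iUnion] at hw
      obtain ⟨v, hv, w2, hw2, rfl⟩ := hw
      have h1 : 1 ≤ v.length := by
        rcases v with _ | _
        · exact absurd hv (hne a)
        · simp
      have := ih w2 hw2
      simp only [List.length_cons, List.length_append]
      omega

lemma length_le_of_mem_support_stepIter (hne : ∀ a : A, [] ∉ (ϑ a).support) (n : ℕ)
    (u : List A) : ∀ w ∈ (stepIter ϑ n u).support, u.length ≤ w.length := by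
  induction n with
  | zero =>
      intro w hw
      simp only [stepIter, PMF.support_pure, Set.mem_singleton_iff] at hw
      subst hw; exact le_rfl
  | succ n ih =>
      intro w hw
      simp only [stepIter, PMF.support_bind, Set.mem_iUnion] at hw
      obtain ⟨v, hv, hw⟩ := hw
      exact le_trans (ih v hv) (length_le_of_mem_support_step ϑ hne v w hw)

lemma exists_infix_step (w : List A) (c : A) (hc : c ∈ w) (v : List A)
    (hv : v ∈ (ϑ c).support) :
    ∃ w' ∈ (stepPMF ϑ w).support, v <:+: w' := by
  classical
  obtain ⟨s, t, rfl⟩ := List.append_of_mem hc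
  set g : A → List A := fun a => if a = c then v else (ϑ a).support_nonempty.some with hg
  have hgmem : ∀ a ∈ s ++ c :: t, g a ∈ (ϑ a).support := by
    intro a _
    by_cases h : a = c
    · subst h; simpa [hg] using hv
    · simpa [hg, h] using (ϑ a).support_nonempty.some_mem
  refine ⟨((s ++ c :: t).map g).flatten, mem_support_step ϑ _ g hgmem, ?_⟩
  refine ⟨(s.map g).flatten, (t.map g).flatten, ?_⟩
  simp [hg, List.flatten_append]

/-! ### mean matrix positivity and reachability -/

lemma meanMatrix_nonneg (a b : A) : 0 ≤ meanMatrix ϑ a b :=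
  tsum_nonneg fun w => mul_nonneg ENNReal.toReal_nonneg (by positivity)

lemma exists_mem_of_entry_pos (a b : A) (h : 0 < meanMatrix ϑ a b) :
    ∃ w ∈ (ϑ b).support, a ∈ w := by
  by_contra hcon
  push_neg at hcon
  have h0 : meanMatrix ϑ a b = 0 := by
    show (∑' w : List A, ((ϑ b) w).toReal * (w.count a : ℝ)) = 0
    convert tsum_zero with w
    by_cases hw : w ∈ (ϑ b).support
    · have : w.count a = 0 := List.count_eq_zero.2 (hcon w hw)
      simp [this]
    · rw [(PMF.apply_eq_zero_iff _ _).2 hw]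
      simp
  rw [h0] at h
  exact lt_irrefl _ h

lemma exists_of_toOuterMeasure_pos (p : PMF (List A)) (s : Set (List A))
    (h : 0 < p.toOuterMeasure s) : ∃ w ∈ p.support, w ∈ s := by
  by_contra hcon
  push_neg at hcon
  have h0 : p.toOuterMeasure s = 0 := by
    rw [PMF.toOuterMeasure_apply]
    convert tsum_zero with w
    by_cases hw : w ∈ s
    · rw [Set.indicator_of_mem hw]
      exact (PMF.apply_eq_zero_iff p w).2 fun hws => hcon w hws hw
    · exact Set.indicator_of_notMem hw _
  simp [h0] at h

lemma meanMatrix_pow_nonneg (k : ℕ) (a b : A) : 0 ≤ ((meanMatrix ϑ) ^ k) a b := by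
  induction k generalizing a b with
  | zero => simp [Matrix.one_apply]; positivity
  | succ k ih =>
      rw [pow_succ, Matrix.mul_apply]
      exact Finset.sum_nonneg fun c _ => mul_nonneg (ih a c) (meanMatrix_nonneg ϑ c b)

lemma exists_mem_of_pow_pos (k : ℕ) (a b : A) (h : 0 < ((meanMatrix ϑ) ^ k) a b) :
    ∃ w ∈ (stepIter ϑ k [b]).support, a ∈ w := by
  induction k generalizing a with
  | zero =>
      simp only [pow_zero, Matrix.one_apply] at h
      have hab : a = b := by by_contra hab; simp [hab] at h
      subst hab
      exact ⟨[a], by simp [stepIter], by simp⟩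
  | succ k ih =>
      rw [pow_succ', Matrix.mul_apply] at h
      have hex : ∃ c : A, 0 < meanMatrix ϑ a c * ((meanMatrix ϑ) ^ k) c b := by
        by_contra hcon
        push_neg at hcon
        have : (∑ c : A, meanMatrix ϑ a c * ((meanMatrix ϑ) ^ k) c b) ≤ 0 :=
          Finset.sum_nonpos fun c _ => hcon c
        exact absurd h (not_lt.2 this)
      obtain ⟨c, hc⟩ := hex
      have h1 : 0 < meanMatrix ϑ a c := by
        rcases lt_or_eq_of_le (meanMatrix_nonneg ϑ a c) with h' | h'
        · exact h'
        · rw [← h'] at hc; simp at hc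
      have h2 : 0 < ((meanMatrix ϑ) ^ k) c b := by
        rcases lt_or_eq_of_le (meanMatrix_pow_nonneg ϑ k c b) with h' | h'
        · exact h'
        · rw [← h'] at hc; simp at hc
      obtain ⟨w, hw, hcw⟩ := ih c h2
      obtain ⟨v, hvsupp, hav⟩ := exists_mem_of_entry_pos ϑ a c h1
      obtain ⟨w', hw', hinf⟩ := exists_infix_step ϑ w c hcw v hvsupp
      refine ⟨w', ?_, hinf.subset hav⟩
      show w' ∈ ((stepIter ϑ k [b]).bind (stepPMF ϑ)).support
      simp only [PMF.support_bind, Set.mem_iUnion]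
      exact ⟨w, hw, hw'⟩

noncomputable def flen : List A → ℝ≥0∞ := fun w => (2:ℝ≥0∞)⁻¹ ^ w.length

lemma Ef_concat (p q : PMF (List A)) :
    Ef (p.bind fun w1 => q.map (w1 ++ ·)) (flen (A := A))
      = Ef p (flen (A := A)) * Ef q (flen (A := A)) := by
  rw [Ef_bind]
  calc ∑' w1, p w1 * Ef (q.map (w1 ++ ·)) flen
      = ∑' w1, p w1 * (flen w1 * Ef q flen) := by
        congr 1; ext w1
        rw [Ef_map]
        congr 1
        calc Ef q (flen ∘ (w1 ++ ·))
            = ∑' w2, flen w1 * (q w2 * flen w2) := by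
              unfold Ef
              congr 1; ext w2
              simp only [Function.comp, flen, List.length_append, pow_add]
              ring
          _ = flen w1 * Ef q flen := ENNReal.tsum_mul_left
    _ = ∑' w1, p w1 * flen w1 * Ef q flen := by congr 1; ext w1; ring
    _ = Ef p flen * Ef q flen := ENNReal.tsum_mul_right

lemma toOuterMeasure_le_one (p : PMF (List A)) (s : Set (List A)) :
    p.toOuterMeasure s ≤ 1 := by
  rw [PMF.toOuterMeasure_apply, ← p.tsum_coe]
  exact ENNReal.tsum_le_tsum fun w => Set.indicator_apply_le fun _ => le_rfl

/-- Markov inequality for the length functional. -/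
lemma markov_len (p : PMF (List A)) (T : ℕ) (t : ℝ) (ht : t ≤ T) :
    p.toOuterMeasure {w | (w.length : ℝ) < t} ≤ 2 ^ T * Ef p (flen (A := A)) := by
  rw [PMF.toOuterMeasure_apply]
  unfold Ef
  rw [← ENNReal.tsum_mul_left]
  apply ENNReal.tsum_le_tsum
  intro w
  by_cases hw : w ∈ {w : List A | (w.length : ℝ) < t}
  · rw [Set.indicator_of_mem hw]
    have hlen : w.length ≤ T := by
      have h : (w.length : ℝ) < T := lt_of_lt_of_le hw ht
      exact_mod_cast h.le
    calc p w = 1 * p w := (one_mul _).symm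
      _ ≤ (2 ^ T * flen w) * p w := by
          apply mul_le_mul_left
          have h1 : ((2:ℝ≥0∞) * 2⁻¹) ^ w.length = 1 := by
            rw [ENNReal.mul_inv_cancel two_ne_zero (by norm_num), one_pow]
          calc (1:ℝ≥0∞) = (2 * 2⁻¹) ^ w.length := h1.symm
            _ = 2 ^ w.length * 2⁻¹ ^ w.length := mul_pow _ _ _
            _ ≤ 2 ^ T * flen w :=
                mul_le_mul_left (pow_le_pow_right₀ (by norm_num) hlen) _
      _ = 2 ^ T * (p w * flen w) := by ring
  · rw [Set.indicator_of_notMem hw]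
    simp

-- product bound over a word
lemma Ef_block (m : ℕ) (ρ : ℝ≥0∞) (hρ : ∀ c : A, Ef (stepIter ϑ m [c]) (flen (A := A)) ≤ ρ)
    (u : List A) : Ef (stepIter ϑ m u) (flen (A := A)) ≤ ρ ^ u.length := by
  induction u with
  | nil => rw [stepIter_nil, Ef_pure]; simp [flen]
  | cons c u ih =>
      have : (c :: u) = [c] ++ u := rfl
      rw [this, stepIter_append, Ef_concat]
      calc Ef (stepIter ϑ m [c]) flen * Ef (stepIter ϑ m u) flen
          ≤ ρ * ρ ^ u.length := mul_le_mul' (hρ c) ih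
        _ = ρ ^ (c :: u).length := by rw [List.length_cons, pow_succ']

lemma Ef_block_one (hne : ∀ a : A, [] ∉ (ϑ a).support) (m : ℕ) (ρ : ℝ≥0∞)
    (h2ρ : 2 * ρ ≤ 1)
    (hρ : ∀ c : A, Ef (stepIter ϑ m [c]) (flen (A := A)) ≤ ρ)
    (u : List A) (hu : 1 ≤ u.length) :
    Ef (stepIter ϑ m u) (flen (A := A)) ≤ (2 * ρ) * flen u := by
  calc Ef (stepIter ϑ m u) flen ≤ ρ ^ u.length := Ef_block ϑ m ρ hρ u
    _ = (2⁻¹ * (2 * ρ)) ^ u.length := by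
        rw [← mul_assoc, ENNReal.inv_mul_cancel two_ne_zero (by norm_num), one_mul]
    _ = 2⁻¹ ^ u.length * (2 * ρ) ^ u.length := mul_pow _ _ _
    _ ≤ 2⁻¹ ^ u.length * (2 * ρ) ^ 1 := by
        exact mul_le_mul_right (pow_le_pow_of_le_one (by simp) h2ρ hu) _
    _ = (2 * ρ) * flen u := by rw [pow_one, flen]; ring

-- expectation at multiples of the block length
lemma En_block (hne : ∀ a : A, [] ∉ (ϑ a).support) (m : ℕ) (ρ : ℝ≥0∞)
    (h2ρ : 2 * ρ ≤ 1)
    (hρ : ∀ c : A, Ef (stepIter ϑ m [c]) (flen (A := A)) ≤ ρ) (a : A) (j : ℕ) :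
    Ef (stepIter ϑ (m * j) [a]) (flen (A := A)) ≤ (2 * ρ) ^ j := by
  induction j with
  | zero =>
      rw [Nat.mul_zero, pow_zero]
      show Ef (PMF.pure [a]) flen ≤ 1
      rw [Ef_pure]
      simp only [flen, List.length_cons, List.length_nil, Nat.zero_add, pow_one]
      exact ENNReal.inv_le_one.2 one_le_two
  | succ j ih =>
      have hmj : m * (j + 1) = m * j + m := by ring
      rw [hmj, stepIter_add, Ef_bind]
      calc ∑' u, (stepIter ϑ (m * j) [a]) u * Ef (stepIter ϑ m u) flen
          ≤ ∑' u, (stepIter ϑ (m * j) [a]) u * ((2 * ρ) * flen u) := by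
            apply ENNReal.tsum_le_tsum
            intro u
            by_cases hu : u ∈ (stepIter ϑ (m * j) [a]).support
            · refine mul_le_mul_right ?_ _
              exact Ef_block_one ϑ hne m ρ h2ρ hρ u
                (by simpa using length_le_of_mem_support_stepIter ϑ hne (m*j) [a] u hu)
            · rw [(PMF.apply_eq_zero_iff _ _).2 hu]; simp
        _ = (2 * ρ) * ∑' u, (stepIter ϑ (m * j) [a]) u * flen u := by
            rw [← ENNReal.tsum_mul_left]; congr 1; ext u; ring
        _ ≤ (2 * ρ) * (2 * ρ) ^ j := mul_le_mul_right ih _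
        _ = (2 * ρ) ^ (j + 1) := (pow_succ' _ _).symm

lemma En_all (hne : ∀ a : A, [] ∉ (ϑ a).support) (m : ℕ) (hm : 0 < m) (ρ : ℝ≥0∞)
    (h2ρ : 2 * ρ ≤ 1)
    (hρ : ∀ c : A, Ef (stepIter ϑ m [c]) (flen (A := A)) ≤ ρ) (a : A) (n : ℕ) :
    Ef (stepIter ϑ n [a]) (flen (A := A)) ≤ (2 * ρ) ^ (n / m) := by
  conv_lhs => rw [show n = m * (n / m) + n % m from (Nat.div_add_mod n m).symm]
  rw [stepIter_add, Ef_bind]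
  calc ∑' u, (stepIter ϑ (m * (n / m)) [a]) u * Ef (stepIter ϑ (n % m) u) flen
      ≤ ∑' u, (stepIter ϑ (m * (n / m)) [a]) u * flen u := by
        apply ENNReal.tsum_le_tsum
        intro u
        refine mul_le_mul_right ?_ _
        apply Ef_le_of_support
        intro w hw
        exact pow_le_pow_of_le_one (by simp) (by exact ENNReal.inv_le_one.2 one_le_two)
          (length_le_of_mem_support_stepIter ϑ hne _ u w hw)
    _ ≤ (2 * ρ) ^ (n / m) := En_block ϑ hne m ρ h2ρ hρ a (n / m)



lemma toOuterMeasure_add_compl (p : PMF (List A)) (s : Set (List A)) :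
    p.toOuterMeasure s + p.toOuterMeasure sᶜ = 1 := by
  rw [PMF.toOuterMeasure_apply, PMF.toOuterMeasure_apply, ← ENNReal.tsum_add, ← p.tsum_coe]
  congr 1; ext w
  by_cases hw : w ∈ s
  · rw [Set.indicator_of_mem hw, Set.indicator_of_notMem (by simpa using hw), add_zero]
  · rw [Set.indicator_of_notMem hw, Set.indicator_of_mem (by simpa using hw), zero_add]

lemma Ef_letter (p : PMF (List A)) (hsupp : ∀ w ∈ p.support, 1 ≤ w.length)
    (d : ℝ≥0∞) (hd1 : d ≤ 1)
    (hP2 : d ≤ p.toOuterMeasure {w : List A | 2 ≤ w.length}) :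
    Ef p (flen (A := A)) ≤ 2⁻¹ * 2⁻¹ + 2⁻¹ * 2⁻¹ * (1 - d) := by
  set s : Set (List A) := {w : List A | 2 ≤ w.length} with hs
  have step1 : Ef p (flen (A := A)) ≤
      Ef p (fun w => 2⁻¹ * 2⁻¹ + (if 2 ≤ w.length then 0 else 2⁻¹ * 2⁻¹)) := by
    apply Ef_le_Ef
    intro w hw
    by_cases h2 : 2 ≤ w.length
    · rw [if_pos h2, add_zero]
      calc flen w = 2⁻¹ ^ w.length := rfl
        _ ≤ 2⁻¹ ^ 2 := pow_le_pow_of_le_one (by simp) (ENNReal.inv_le_one.2 one_le_two) h2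
        _ = 2⁻¹ * 2⁻¹ := sq _
    · have h1 : w.length = 1 := le_antisymm (by omega) (hsupp w hw)
      rw [if_neg h2]
      have he : flen w = 2⁻¹ * 2⁻¹ + 2⁻¹ * 2⁻¹ := by
        calc flen w = 2⁻¹ ^ w.length := rfl
          _ = 2⁻¹ := by rw [h1, pow_one]
          _ = 2⁻¹ * (2⁻¹ + 2⁻¹) := by rw [ENNReal.inv_two_add_inv_two, mul_one]
          _ = 2⁻¹ * 2⁻¹ + 2⁻¹ * 2⁻¹ := mul_add _ _ _
      exact le_of_eq he
  have step2 : Ef p (fun w => 2⁻¹ * 2⁻¹ + (if 2 ≤ w.length then 0 else 2⁻¹ * 2⁻¹))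
      = 2⁻¹ * 2⁻¹ + 2⁻¹ * 2⁻¹ * p.toOuterMeasure sᶜ := by
    unfold Ef
    calc ∑' w, p w * (2⁻¹ * 2⁻¹ + (if 2 ≤ w.length then 0 else 2⁻¹ * 2⁻¹))
        = ∑' w, (p w * (2⁻¹ * 2⁻¹) + 2⁻¹ * 2⁻¹ * Set.indicator sᶜ (⇑p) w) := by
          congr 1; ext w
          rw [mul_add]
          congr 1
          by_cases h2 : 2 ≤ w.length
          · rw [if_pos h2, Set.indicator_of_notMem (show w ∉ sᶜ by simp [hs, h2]),
              mul_zero, mul_zero]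
          · rw [if_neg h2, Set.indicator_of_mem (show w ∈ sᶜ by simp [hs]; omega), mul_comm]
      _ = (∑' w, p w * (2⁻¹ * 2⁻¹)) + ∑' w, 2⁻¹ * 2⁻¹ * Set.indicator sᶜ (⇑p) w :=
          ENNReal.tsum_add
      _ = 2⁻¹ * 2⁻¹ + 2⁻¹ * 2⁻¹ * p.toOuterMeasure sᶜ := by
          rw [ENNReal.tsum_mul_right, p.tsum_coe, one_mul, ENNReal.tsum_mul_left,
            ← PMF.toOuterMeasure_apply]
  have step3 : p.toOuterMeasure sᶜ ≤ 1 - d := by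
    apply ENNReal.le_sub_of_add_le_right (ne_top_of_le_ne_top one_ne_top hd1)
    calc p.toOuterMeasure sᶜ + d ≤ p.toOuterMeasure sᶜ + p.toOuterMeasure s :=
          add_le_add_right hP2 _
      _ = 1 := by rw [add_comm, toOuterMeasure_add_compl]
  calc Ef p (flen (A := A)) ≤ _ := step1
    _ = _ := step2
    _ ≤ 2⁻¹ * 2⁻¹ + 2⁻¹ * 2⁻¹ * (1 - d) := add_le_add_right (mul_le_mul_right step3 _) _


open Filter MeasureTheory

theorem stmt12_aux {A : Type*} [Fintype A] [DecidableEq A] (ϑ : A → PMF (List A))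
    (hfin : ∀ a : A, (ϑ a).support.Finite)
    (hne : ∀ a : A, [] ∉ (ϑ a).support)
    (hprim : Primitive ϑ) (hexp : Expanding ϑ) :
    (∃ C K : ℝ, 0 < C ∧ 0 < K ∧ ∀ a : A, ∀ᶠ n : ℕ in Filter.atTop,
      (iterPMF ϑ n a).toOuterMeasure {w | (w.length : ℝ) < K * n} ≤
        ENNReal.ofReal (Real.exp (-C * n))) ∧
    (∀ (Ω : Type) [MeasurableSpace Ω] (μ : Measure Ω), IsProbabilityMeasure μ →
      ∀ (a : A) (X : ℕ → Ω → List A),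
        (∀ (n : ℕ) (s : Set (List A)), μ (X n ⁻¹' s) = (iterPMF ϑ n a).toOuterMeasure s) →
        ∀ᵐ ω ∂μ, Filter.Tendsto (fun n => (X n ω).length) Filter.atTop Filter.atTop) := by
  classical
  obtain ⟨k, hk⟩ := hprim
  obtain ⟨bx, hbx⟩ := hexp
  haveI : Nonempty A := ⟨bx⟩
  set m : ℕ := k + 1 with hmdef
  have hm : 0 < m := Nat.succ_pos k
  -- growth within m steps from any letter
  have grow : ∀ c : A, ∃ w ∈ (stepIter ϑ m [c]).support, 2 ≤ w.length := by
    intro c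
    obtain ⟨w, hw, hbw⟩ := exists_mem_of_pow_pos ϑ k bx c (hk bx c)
    obtain ⟨v, hvs, hv2⟩ := exists_of_toOuterMeasure_pos (ϑ bx) _ hbx
    obtain ⟨w', hw', hinf⟩ := exists_infix_step ϑ w bx hbw v hvs
    refine ⟨w', ?_, ?_⟩
    · show w' ∈ ((stepIter ϑ k [c]).bind (stepPMF ϑ)).support
      simp only [PMF.support_bind, Set.mem_iUnion]
      exact ⟨w, hw, hw'⟩
    · have h1 := hinf.length_le
      have h2 : 1 < v.length := hv2
      omega
  -- the uniform growth probability
  set P2 : A → ℝ≥0∞ := fun c => (stepIter ϑ m [c]).toOuterMeasure {w | 2 ≤ w.length}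
    with hP2def
  have hP2pos : ∀ c, 0 < P2 c := by
    intro c
    obtain ⟨w, hw, h2⟩ := grow c
    have hpos : 0 < (stepIter ϑ m [c]) w :=
      zero_lt_iff.2 ((PMF.mem_support_iff _ w).1 hw)
    calc (0:ℝ≥0∞) < (stepIter ϑ m [c]) w := hpos
      _ ≤ P2 c := by
          show _ ≤ (stepIter ϑ m [c]).toOuterMeasure {w : List A | 2 ≤ w.length}
          rw [PMF.toOuterMeasure_apply]
          refine le_trans (le_of_eq ?_) (ENNReal.le_tsum w)
          rw [Set.indicator_of_mem (by exact h2)]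
  set d : ℝ≥0∞ := Finset.univ.inf' Finset.univ_nonempty P2 with hddef
  have hd0 : 0 < d := (Finset.lt_inf'_iff _).2 fun c _ => hP2pos c
  have hdle : ∀ c, d ≤ P2 c := fun c => Finset.inf'_le _ (Finset.mem_univ c)
  have hd1 : d ≤ 1 := (hdle bx).trans (toOuterMeasure_le_one _ _)
  set ρ : ℝ≥0∞ := 2⁻¹ * 2⁻¹ + 2⁻¹ * 2⁻¹ * (1 - d) with hρdef
  have hρc : ∀ c : A, Ef (stepIter ϑ m [c]) (flen (A := A)) ≤ ρ := by
    intro c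
    refine Ef_letter _ ?_ d hd1 (hdle c)
    intro w hw
    simpa using length_le_of_mem_support_stepIter ϑ hne m [c] w hw
  have h2ρlt : 2 * ρ < 1 := by
    have h1d : 1 - d < 1 := ENNReal.sub_lt_self one_ne_top one_ne_zero hd0.ne'
    have hinv2 : (2:ℝ≥0∞) * 2⁻¹ = 1 := ENNReal.mul_inv_cancel two_ne_zero (by norm_num)
    calc 2 * ρ = 2 * (2⁻¹ * 2⁻¹) + 2 * (2⁻¹ * 2⁻¹ * (1 - d)) := by rw [hρdef, mul_add]
      _ = 2⁻¹ + 2⁻¹ * (1 - d) := by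
          simp only [← mul_assoc, hinv2, one_mul]
      _ < 2⁻¹ + 2⁻¹ * 1 := by
          refine ENNReal.add_lt_add_left (by norm_num) ?_
          exact (ENNReal.mul_lt_mul_iff_right (by norm_num) (by norm_num)).2 h1d
      _ = 1 := by rw [mul_one, ENNReal.inv_two_add_inv_two]
  have h2ρ : 2 * ρ ≤ 1 := h2ρlt.le
  have hρtop : 2 * ρ ≠ ⊤ := ne_top_of_le_ne_top one_ne_top h2ρ
  have hρ0 : 2 * ρ ≠ 0 := by
    apply mul_ne_zero two_ne_zero
    rw [hρdef]
    intro h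
    have : (2:ℝ≥0∞)⁻¹ * 2⁻¹ = 0 := by
      have := add_eq_zero.1 h
      exact this.1
    simp at this
  -- real constants
  set q : ℝ := (2 * ρ).toReal with hqdef
  have hq0 : 0 < q := ENNReal.toReal_pos hρ0 hρtop
  have hq1 : q < 1 := by
    have h := (ENNReal.toReal_lt_toReal hρtop one_ne_top).2 h2ρlt
    rw [ENNReal.toReal_one] at h
    exact h
  set c0 : ℝ := -Real.log q with hc0def
  have hc0 : 0 < c0 := by
    have := Real.log_neg hq0 hq1
    rw [hc0def]; linarith
  have hlog2 : 0 < Real.log 2 := Real.log_pos one_lt_two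
  have hmR : (0:ℝ) < m := by exact_mod_cast hm
  set K : ℝ := c0 / (2 * m * Real.log 2) with hKdef
  have hK : 0 < K := div_pos hc0 (by positivity)
  set C : ℝ := c0 / (4 * m) with hCdef
  have hC : 0 < C := div_pos hc0 (by positivity)
  -- the central estimate
  have main : ∀ (a : A), ∀ n : ℕ, (4 * m * (Real.log 2 + c0) / c0) ≤ n →
      (iterPMF ϑ n a).toOuterMeasure {w | (w.length : ℝ) < K * n} ≤
        ENNReal.ofReal (Real.exp (-C * n)) := by
    intro a n hn
    rw [iterPMF_eq]
    set T : ℕ := ⌈K * n⌉₊ with hTdef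
    set j : ℕ := n / m with hjdef
    have step1 : (stepIter ϑ n [a]).toOuterMeasure {w | (w.length : ℝ) < K * n}
        ≤ 2 ^ T * Ef (stepIter ϑ n [a]) (flen (A := A)) :=
      markov_len _ T (K * (n:ℝ)) (Nat.le_ceil _)
    have step2 : Ef (stepIter ϑ n [a]) (flen (A := A)) ≤ (2 * ρ) ^ j :=
      En_all ϑ hne m hm ρ h2ρ hρc a n
    have step3 : (2:ℝ≥0∞) ^ T * (2 * ρ) ^ j = ENNReal.ofReal ((2:ℝ) ^ T * q ^ j) := by
      have e1 : (2:ℝ≥0∞) ^ T = ENNReal.ofReal ((2:ℝ) ^ T) := by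
        rw [ENNReal.ofReal_pow (by norm_num : (0:ℝ) ≤ 2)]
        norm_num
      have e2 : (2 * ρ) ^ j = ENNReal.ofReal (q ^ j) := by
        rw [ENNReal.ofReal_pow hq0.le, hqdef, ENNReal.ofReal_toReal hρtop]
      rw [e1, e2, ← ENNReal.ofReal_mul (by positivity)]
    -- the real inequality
    have hTle : (T:ℝ) ≤ K * n + 1 := by
      rw [hTdef]
      exact (Nat.ceil_lt_add_one (by positivity)).le
    have hjge : (n:ℝ) / m - 1 ≤ (j:ℝ) := by
      have h1 : m * j + n % m = n := Nat.div_add_mod n m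
      have h2 : n % m < m := Nat.mod_lt n hm
      have h1' : (m:ℝ) * j + (n % m : ℕ) = n := by exact_mod_cast h1
      have h2' : ((n % m : ℕ):ℝ) < m := by exact_mod_cast h2
      rw [div_sub_one hmR.ne', div_le_iff₀ hmR]
      nlinarith
    have hreal : (2:ℝ) ^ T * q ^ j ≤ Real.exp (-C * n) := by
      have e2 : (2:ℝ) ^ T = Real.exp (T * Real.log 2) := by
        rw [Real.exp_nat_mul, Real.exp_log (by norm_num : (0:ℝ) < 2)]
      have eq' : q ^ j = Real.exp (j * Real.log q) := by
        rw [Real.exp_nat_mul, Real.exp_log hq0]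
      rw [e2, eq', ← Real.exp_add]
      apply Real.exp_le_exp.2
      have hlogq : Real.log q = -c0 := by rw [hc0def]; ring
      rw [hlogq]
      have hKl : K * Real.log 2 = c0 / (2 * m) := by
        rw [hKdef]; field_simp
      have hb1 : (T:ℝ) * Real.log 2 ≤ (K * n + 1) * Real.log 2 :=
        mul_le_mul_of_nonneg_right hTle hlog2.le
      have hb2 : (j:ℝ) * (-c0) ≤ ((n:ℝ)/m - 1) * (-c0) := by nlinarith
      have hexp : (K * n + 1) * Real.log 2 + ((n:ℝ)/m - 1) * (-c0) ≤ -C * n := by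
        have hm0 : (m:ℝ) ≠ 0 := hmR.ne'
        have hl0 : Real.log 2 ≠ 0 := hlog2.ne'
        have h5 : (4 * m * (Real.log 2 + c0) / c0) ≤ (n:ℝ) := hn
        rw [div_le_iff₀ hc0] at h5
        have e1 : (K * n + 1) * Real.log 2 + ((n:ℝ)/m - 1) * (-c0)
            = -((n:ℝ)*c0/(2*m)) + (Real.log 2 + c0) := by
          rw [hKdef]; field_simp; ring
        have e2 : -C * (n:ℝ) = -((n:ℝ)*c0/(4*m)) := by rw [hCdef]; ring
        rw [e1, e2]
        have h9 : (Real.log 2 + c0) ≤ (n:ℝ)*c0/(4*m) := by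
          rw [le_div_iff₀ (by positivity)]
          nlinarith
        have h10 : (n:ℝ)*c0/(2*m) = 2*((n:ℝ)*c0/(4*m)) := by field_simp; ring
        linarith [h9, h10]
      exact le_trans (add_le_add hb1 hb2) hexp
    calc (stepIter ϑ n [a]).toOuterMeasure {w | (w.length : ℝ) < K * n}
        ≤ 2 ^ T * Ef (stepIter ϑ n [a]) (flen (A := A)) := step1
      _ ≤ 2 ^ T * (2 * ρ) ^ j := mul_le_mul_right step2 _
      _ = ENNReal.ofReal ((2:ℝ) ^ T * q ^ j) := step3
      _ ≤ ENNReal.ofReal (Real.exp (-C * n)) := ENNReal.ofReal_le_ofReal hreal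
  have partA : ∀ a : A, ∀ᶠ n : ℕ in atTop,
      (iterPMF ϑ n a).toOuterMeasure {w | (w.length : ℝ) < K * n} ≤
        ENNReal.ofReal (Real.exp (-C * n)) := by
    intro a
    obtain ⟨N, hN⟩ := exists_nat_ge (4 * m * (Real.log 2 + c0) / c0)
    refine Filter.eventually_atTop.2 ⟨N, fun n hn => main a n ?_⟩
    exact hN.trans (by exact_mod_cast hn)
  refine ⟨⟨C, K, hC, hK, partA⟩, ?_⟩
  intro Ω _ μ hμ a X hX
  obtain ⟨N, hN⟩ := Filter.eventually_atTop.1 (partA a)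
  set s : ℕ → Set Ω := fun n => X n ⁻¹' {w | ((w.length : ℝ)) < K * n} with hsdef
  have hμs : ∀ n, μ (s n) = (iterPMF ϑ n a).toOuterMeasure {w | (w.length : ℝ) < K * n} :=
    fun n => hX n _
  have hbound : ∀ n, μ (s n) ≤ ENNReal.ofReal (Real.exp (C * N) * Real.exp (-C) ^ n) := by
    intro n
    have hxn : Real.exp (C * N) * Real.exp (-C) ^ n = Real.exp (C * N + (-C) * n) := by
      rw [Real.exp_add]
      congr 1
      rw [← Real.exp_nat_mul]
      congr 1
      ring
    rw [hxn]
    rcases le_or_gt N n with h | h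
    · rw [hμs n]
      refine (hN n h).trans (ENNReal.ofReal_le_ofReal ?_)
      apply Real.exp_le_exp.2
      have hC1 : (0:ℝ) ≤ C * N := by positivity
      linarith
    · have h1 : (1:ℝ≥0∞) ≤ ENNReal.ofReal (Real.exp (C * N + (-C) * n)) := by
        rw [← ENNReal.ofReal_one]
        apply ENNReal.ofReal_le_ofReal
        apply Real.one_le_exp
        have : (n:ℝ) ≤ N := by exact_mod_cast h.le
        nlinarith
      exact le_trans prob_le_one h1
  have hsum : (∑' n, μ (s n)) ≠ ⊤ := by
    have hlt1 : Real.exp (-C) < 1 := by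
      rw [Real.exp_lt_one_iff]
      linarith
    have hs : Summable (fun n : ℕ => Real.exp (C * N) * Real.exp (-C) ^ n) :=
      (summable_geometric_of_lt_one (Real.exp_pos _).le hlt1).mul_left _
    have hle : (∑' n, μ (s n)) ≤
        ENNReal.ofReal (∑' n : ℕ, Real.exp (C * N) * Real.exp (-C) ^ n) := by
      rw [ENNReal.ofReal_tsum_of_nonneg (fun n => by positivity) hs]
      exact ENNReal.tsum_le_tsum hbound
    exact ne_top_of_le_ne_top ENNReal.ofReal_ne_top hle
  have hae := MeasureTheory.ae_eventually_notMem hsum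
  filter_upwards [hae] with ω hω
  have hev : ∀ᶠ n : ℕ in atTop, K * n ≤ ((X n ω).length : ℝ) := by
    filter_upwards [hω] with n hn
    have : ¬ (((X n ω).length : ℝ) < K * n) := hn
    linarith [not_lt.1 this]
  have h1 : Tendsto (fun n : ℕ => K * (n:ℝ)) atTop atTop :=
    Filter.Tendsto.const_mul_atTop hK tendsto_natCast_atTop_atTop
  have h2 : Tendsto (fun n => ((X n ω).length : ℝ)) atTop atTop :=
    tendsto_atTop_mono' atTop hev h1
  exact tendsto_natCast_atTop_iff.1 h2


end Aux

open Filter MeasureTheory in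
/-- for an expanding primitive random substitution there are `C, K > 0`
with `P[|ϑ^n(a)| < K n] ≤ e^{-C n}` for all letters `a` and all large `n`; in
particular `|ϑ^n(a)| → ∞` almost surely (for any realisation of the chain with the
correct marginal distributions). -/
theorem stmt12 {A : Type*} [Fintype A] [DecidableEq A] (ϑ : A → PMF (List A))
    (hfin : ∀ a : A, (ϑ a).support.Finite)
    (hne : ∀ a : A, [] ∉ (ϑ a).support)
    (hprim : Primitive ϑ) (hexp : Expanding ϑ) :
    (∃ C K : ℝ, 0 < C ∧ 0 < K ∧ ∀ a : A, ∀ᶠ n : ℕ in Filter.atTop,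
      (iterPMF ϑ n a).toOuterMeasure {w | (w.length : ℝ) < K * n} ≤
        ENNReal.ofReal (Real.exp (-C * n))) ∧
    (∀ (Ω : Type) [MeasurableSpace Ω] (μ : Measure Ω), IsProbabilityMeasure μ →
      ∀ (a : A) (X : ℕ → Ω → List A),
        (∀ (n : ℕ) (s : Set (List A)), μ (X n ⁻¹' s) = (iterPMF ϑ n a).toOuterMeasure s) →
        ∀ᵐ ω ∂μ, Filter.Tendsto (fun n => (X n ω).length) Filter.atTop Filter.atTop) :=
  stmt12_aux ϑ hfin hne hprim hexp

end RS
end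

section
/- Let \mathbb{X}_\zeta \subset \{a,b\}^{\mathbb{Z}} be the subshift generated by the random substitution \zeta: a, b \mapsto \{ab, ba\} with probabilities p and 1-p (0 < p < 1), and \mu the associated frequency measure. Then the metric entropy of the shift with respect to \mu is h_\mu = -(1/2)(p \log p + (1-p)\log(1-p)). -/
namespace RS

variable {A : Type*} [Fintype A] [DecidableEq A]

/-- The joint distribution of the tuple `(ϑ(u_1), …, ϑ(u_m))` of independent
inflation words of the letters of `u`. -/
noncomputable def tupleStep (ϑ : A → PMF (List A)) : List A → PMF (List (List A))
  | [] => PMF.pure []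
  | a :: u => (ϑ a).bind fun w => (tupleStep ϑ u).map (w :: ·)

/-- The number of occurrences of `v` as a letter of the induced word `ϑ_ℓ(u)`. -/
def indCount (v : List A) (ws : List (List A)) : ℕ :=
  (List.range ws.headI.length).countP fun i => (ws.flatten.drop i).take v.length == v

/-- The mean matrix of the induced substitution: `(M_{ϑ_ℓ})_{v u} = E[|ϑ_ℓ(u)|_v]`. -/
noncomputable def inducedMean (ϑ : A → PMF (List A)) (v u : List A) : ℝ :=
  ∑' ws : List (List A), ((tupleStep ϑ u) ws).toReal * (indCount v ws : ℝ)

/-- The random substitution `ζ : a, b ↦ ab` (prob. `p`), `ba` (prob. `1-p`),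
with `a = false`, `b = true`. -/
noncomputable def zeta (p : ℝ) (hp : p ≤ 1) : Bool → PMF (List Bool) := fun _ =>
  (PMF.bernoulli (Real.toNNReal p) (Real.toNNReal_le_one.mpr hp)).map
    (fun t => if t then [false, true] else [true, false])

section Aux

open ENNReal
noncomputable def En {α : Type*} (q : PMF α) (G : α → ℝ≥0∞) : ℝ≥0∞ := ∑' x, q x * G x
lemma En_pure {α : Type*} (x : α) (G : α → ℝ≥0∞) : En (PMF.pure x) G = G x := by
  rw [En, tsum_eq_single x]
  · simp [PMF.pure_apply]
  · intro y hy; simp [PMF.pure_apply, hy]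
lemma En_bind {α β : Type*} (q : PMF α) (k : α → PMF β) (G : β → ℝ≥0∞) :
    En (q.bind k) G = En q fun x => En (k x) G := by
  simp only [En, PMF.bind_apply]
  have h1 : ∀ x : β, (∑' a : α, q a * (k a) x) * G x = ∑' a : α, q a * ((k a) x * G x) := by
    intro x
    rw [← ENNReal.tsum_mul_right]
    congr 1; ext a; ring
  simp only [h1]
  rw [ENNReal.tsum_comm]
  congr 1; ext a
  rw [ENNReal.tsum_mul_left]
lemma En_map {α β : Type*} (q : PMF α) (h : α → β) (G : β → ℝ≥0∞) :
    En (q.map h) G = En q (fun x => G (h x)) := by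
  rw [PMF.map, En_bind]
  refine tsum_congr fun x => ?_
  simp only [Function.comp_apply, En_pure]
lemma En_zeta (p : ℝ) (hp0 : 0 ≤ p) (hp : p ≤ 1) (b : Bool) (G : List Bool → ℝ≥0∞) :
    En (zeta p hp b) G =
      ENNReal.ofReal p * G [false, true] + ENNReal.ofReal (1 - p) * G [true, false] := by
  rw [zeta, En_map]
  have : En (PMF.bernoulli (Real.toNNReal p) (Real.toNNReal_le_one.mpr hp))
      (fun t => G (if t then [false, true] else [true, false]))
      = (1 - ENNReal.ofReal p) * G [true, false] + ENNReal.ofReal p * G [false, true] := by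
    rw [En, tsum_bool]
    simp [PMF.bernoulli_apply, ENNReal.ofReal]
  rw [this]
  have h1 : (1 : ℝ≥0∞) - ENNReal.ofReal p = ENNReal.ofReal (1 - p) := by
    rw [← ENNReal.ofReal_one, ← ENNReal.ofReal_sub _ hp0]
  rw [h1]; ring
lemma En_add {α : Type*} (q : PMF α) (G1 G2 : α → ℝ≥0∞) :
    En q (fun x => G1 x + G2 x) = En q G1 + En q G2 := by
  simp only [En, mul_add]
  exact ENNReal.tsum_add
lemma En_congr {α : Type*} (q : PMF α) {G1 G2 : α → ℝ≥0∞}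
    (h : ∀ x ∈ q.support, G1 x = G2 x) : En q G1 = En q G2 := by
  refine tsum_congr fun x => ?_
  by_cases hx : q x = 0
  · simp [hx]
  · rw [h x hx]
lemma En_const_one {α : Type*} (q : PMF α) : En q (fun _ => 1) = 1 := by
  simp [En, q.tsum_coe]
lemma En_zero {α : Type*} (q : PMF α) : En q (fun _ => 0) = 0 := by simp [En]
lemma En_const_mul {α : Type*} (q : PMF α) (c : ℝ≥0∞) (G : α → ℝ≥0∞) :
    En q (fun x => c * G x) = c * En q G := by
  simp only [En]
  rw [← ENNReal.tsum_mul_left]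
  congr 1; ext x; ring

section W
variable (p : ℝ)
noncomputable def wA (x : Bool) : ℝ := if x then 1 - p else p
noncomputable def wB (x : Bool) : ℝ := if x then p else 1 - p
noncomputable def w2 (x y : Bool) : ℝ := if x = y then 0 else wA p x
noncomputable def W0 : List Bool → ℝ
  | [] => 1
  | [x] => wA p x
  | x :: y :: t => w2 p x y * W0 t
noncomputable def W1 : List Bool → ℝ
  | [] => 1
  | x :: t => wB p x * W0 p t
variable {p}
lemma wA_nonneg (hp0 : 0 ≤ p) (hp1 : p ≤ 1) (x : Bool) : 0 ≤ wA p x := by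
  cases x <;> simp [wA] <;> linarith
lemma wB_nonneg (hp0 : 0 ≤ p) (hp1 : p ≤ 1) (x : Bool) : 0 ≤ wB p x := by
  cases x <;> simp [wB] <;> linarith
lemma w2_nonneg (hp0 : 0 ≤ p) (hp1 : p ≤ 1) (x y : Bool) : 0 ≤ w2 p x y := by
  by_cases h : x = y <;> simp [w2, h, wA_nonneg hp0 hp1]
lemma W0_nonneg (hp0 : 0 ≤ p) (hp1 : p ≤ 1) : ∀ v : List Bool, 0 ≤ W0 p v
  | [] => by simp [W0]
  | [x] => by simpa [W0] using wA_nonneg hp0 hp1 x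
  | x :: y :: t => by
      rw [W0]
      exact mul_nonneg (w2_nonneg hp0 hp1 x y) (W0_nonneg hp0 hp1 t)
lemma W1_nonneg (hp0 : 0 ≤ p) (hp1 : p ≤ 1) : ∀ v : List Bool, 0 ≤ W1 p v
  | [] => by simp [W1]
  | x :: t => by
      rw [W1]
      exact mul_nonneg (wB_nonneg hp0 hp1 x) (W0_nonneg hp0 hp1 t)

noncomputable def Bn (hp : p ≤ 1) (n : ℕ) : PMF (List (List Bool)) :=
  tupleStep (zeta p hp) (List.replicate n false)
lemma Bn_zero (hp : p ≤ 1) : Bn (p := p) hp 0 = PMF.pure [] := rfl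
lemma Bn_succ (hp : p ≤ 1) (n : ℕ) :
    Bn (p := p) hp (n + 1) =
      (zeta p hp false).bind fun w => (Bn (p := p) hp n).map (w :: ·) := by
  rw [Bn, List.replicate_succ]; rfl

lemma En_Bn_succ (hp0 : 0 ≤ p) (hp : p ≤ 1) (n : ℕ) (G : List (List Bool) → ℝ≥0∞) :
    En (Bn (p := p) hp (n + 1)) G =
      ENNReal.ofReal p * En (Bn (p := p) hp n) (fun ws => G ([false, true] :: ws)) +
      ENNReal.ofReal (1 - p) * En (Bn (p := p) hp n) (fun ws => G ([true, false] :: ws)) := by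
  rw [Bn_succ, En_bind, En_zeta p hp0 hp, En_map, En_map]

lemma ind_cons2 (x y : Bool) (t : List Bool) (y' z' : Bool) (l : List Bool) :
    (if (y' :: z' :: l).take (x :: y :: t).length = x :: y :: t then (1:ℝ≥0∞) else 0)
    = (if x = y' ∧ y = z' then (1:ℝ≥0∞) else 0) * (if l.take t.length = t then 1 else 0) := by
  simp only [List.length_cons, List.take_succ_cons]
  by_cases h1 : x = y'
  · subst h1
    by_cases h2 : y = z'
    · subst h2
      by_cases h3 : l.take t.length = t <;> simp [List.cons.injEq, h3]
    · simp [List.cons.injEq, Ne.symm h2, h2]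
  · simp [List.cons.injEq, Ne.symm h1, h1]

lemma En_chi0 (hp0 : 0 ≤ p) (hp : p ≤ 1) :
    ∀ (n : ℕ) (v : List Bool), v.length ≤ 2 * n →
      En (Bn (p := p) hp n) (fun ws => if ws.flatten.take v.length = v then 1 else 0)
        = ENNReal.ofReal (W0 p v) := by
  intro n
  induction n with
  | zero =>
      intro v hv
      simp only [Nat.mul_zero, Nat.le_zero, List.length_eq_zero_iff] at hv
      subst hv
      simp [Bn_zero, En_pure, W0]
  | succ n ih =>
      intro v hv
      rw [En_Bn_succ hp0 hp]
      match v with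
      | [] =>
          simp only [List.length_nil, List.take_zero, eq_self_iff_true, if_true,
            En_const_one, mul_one]
          rw [W0, ← ENNReal.ofReal_add hp0 (by linarith : (0:ℝ) ≤ 1 - p)]
          norm_num
      | [x] =>
          have key : ∀ (y' z' : Bool) (l : List Bool),
              (if ((y' :: z' :: l).take [x].length = [x]) then (1:ℝ≥0∞) else 0)
              = if x = y' then 1 else 0 := by
            intro y' z' l
            simp only [List.length_cons, List.length_nil, List.take_succ_cons, List.take_zero]
            by_cases h : x = y' <;> simp_all [eq_comm]
          simp only [List.flatten_cons, List.cons_append, List.nil_append]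
          have e1 : ∀ y' z' : Bool, En (Bn (p := p) hp n)
              (fun ws => if ((y' :: z' :: ws.flatten).take [x].length = [x]) then (1:ℝ≥0∞) else 0)
              = if x = y' then 1 else 0 := by
            intro y' z'
            rw [En_congr _ (fun ws _ => key y' z' ws.flatten)]
            by_cases h : x = y' <;> simp [h, En_const_one, En_zero]
          rw [e1, e1, W0]
          cases x <;> simp [wA] <;> rw [mul_one]
      | x :: y :: t =>
          have hlen : t.length ≤ 2 * n := by
            simp only [List.length_cons] at hv; omega
          simp only [List.flatten_cons, List.cons_append, List.nil_append]
          have e1 : ∀ y' z' : Bool, En (Bn (p := p) hp n)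
              (fun ws => if ((y' :: z' :: ws.flatten).take (x :: y :: t).length = x :: y :: t)
                then (1:ℝ≥0∞) else 0)
              = (if x = y' ∧ y = z' then (1:ℝ≥0∞) else 0) * ENNReal.ofReal (W0 p t) := by
            intro y' z'
            rw [En_congr _ (fun ws _ => ind_cons2 x y t y' z' ws.flatten), En_const_mul, ih t hlen]
          rw [e1, e1, W0]
          have hofm : ENNReal.ofReal (w2 p x y * W0 p t)
              = ENNReal.ofReal (w2 p x y) * ENNReal.ofReal (W0 p t) :=
            ENNReal.ofReal_mul (w2_nonneg hp0 hp x y)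
          rw [hofm]
          cases x <;> cases y <;>
            simp [w2, wA] <;> ring


lemma ind_cons1 (x : Bool) (t : List Bool) (z' : Bool) (l : List Bool) :
    (if (z' :: l).take (x :: t).length = x :: t then (1:ℝ≥0∞) else 0)
    = (if x = z' then (1:ℝ≥0∞) else 0) * (if l.take t.length = t then 1 else 0) := by
  simp only [List.length_cons, List.take_succ_cons]
  by_cases h1 : x = z'
  · subst h1
    by_cases h3 : l.take t.length = t <;> simp [List.cons.injEq, h3]
  · simp [List.cons.injEq, Ne.symm h1, h1]

lemma En_chi1 (hp0 : 0 ≤ p) (hp : p ≤ 1) (n : ℕ) (x : Bool) (t : List Bool)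
    (ht : t.length ≤ 2 * n) :
    En (Bn (p := p) hp (n + 1))
        (fun ws => if (ws.flatten.drop 1).take (x :: t).length = x :: t then 1 else 0)
      = ENNReal.ofReal (W1 p (x :: t)) := by
  rw [En_Bn_succ hp0 hp]
  simp only [List.flatten_cons, List.cons_append, List.nil_append, List.drop_succ_cons,
    List.drop_zero]
  have e1 : ∀ z' : Bool, En (Bn (p := p) hp n)
      (fun ws => if ((z' :: ws.flatten).take (x :: t).length = x :: t) then (1:ℝ≥0∞) else 0)
      = (if x = z' then (1:ℝ≥0∞) else 0) * ENNReal.ofReal (W0 p t) := by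
    intro z'
    rw [En_congr _ (fun ws _ => ind_cons1 x t z' ws.flatten), En_const_mul,
      En_chi0 hp0 hp n t ht]
  rw [e1, e1, W1]
  rw [ENNReal.ofReal_mul (wB_nonneg hp0 hp x)]
  cases x <;> simp [wB] <;> ring

lemma supp_Bn (hp : p ≤ 1) :
    ∀ (n : ℕ) (ws : List (List Bool)), ws ∈ (Bn (p := p) hp n).support →
      ws.length = n ∧ ∀ w ∈ ws, w = [false, true] ∨ w = [true, false] := by
  intro n
  induction n with
  | zero =>
      intro ws hws
      rw [Bn_zero, PMF.support_pure] at hws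
      subst hws
      simp
  | succ n ih =>
      intro ws hws
      rw [Bn_succ] at hws
      rw [PMF.mem_support_bind_iff] at hws
      obtain ⟨w, hw, hws⟩ := hws
      rw [PMF.support_map] at hws
      obtain ⟨ws', hws', rfl⟩ := hws
      obtain ⟨hlen, hall⟩ := ih ws' hws'
      have hwblock : w = [false, true] ∨ w = [true, false] := by
        rw [zeta, PMF.support_map] at hw
        obtain ⟨tb, _, rfl⟩ := hw
        cases tb
        · right; rfl
        · left; rfl
      refine ⟨by simp [hlen], ?_⟩
      intro w' hw'
      rcases List.mem_cons.mp hw' with h | h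
      · subst h; exact hwblock
      · exact hall w' h

lemma En_indCount (hp0 : 0 ≤ p) (hp : p ≤ 1) (n : ℕ) (hn : 1 ≤ n) (v : List Bool)
    (hv : v.length = n) :
    En (Bn (p := p) hp n) (fun ws => (indCount v ws : ℝ≥0∞))
      = ENNReal.ofReal (W0 p v) + ENNReal.ofReal (W1 p v) := by
  have hsplit : ∀ ws ∈ (Bn (p := p) hp n).support,
      ((indCount v ws : ℝ≥0∞))
        = (if ws.flatten.take v.length = v then (1:ℝ≥0∞) else 0)
          + (if (ws.flatten.drop 1).take v.length = v then (1:ℝ≥0∞) else 0) := by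
    intro ws hws
    obtain ⟨hlen, hall⟩ := supp_Bn hp n ws hws
    match ws, n, hn, hlen with
    | w :: rest, _ + 1, _, hlen =>
      have hw2 : w.length = 2 := by
        rcases hall w (List.mem_cons_self) with h | h <;> simp [h]
      rw [indCount]
      have hhead : (w :: rest).headI = w := rfl
      rw [hhead, hw2]
      have hr2 : List.range 2 = [0, 1] := rfl
      rw [hr2]
      simp only [List.countP_cons, List.countP_nil, List.drop_zero]
      by_cases h0 : ((w ++ rest.flatten).take v.length) = v <;>
        by_cases h1 : ((w ++ rest.flatten).tail.take v.length) = v <;>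
        simp [h0, h1, List.drop_one, List.flatten_cons] <;> norm_num
  rw [En_congr _ hsplit, En_add]
  match v, n, hn with
  | v, n + 1, _ =>
    have h0 := En_chi0 hp0 hp (n + 1) v (by omega)
    match v, hv with
    | x :: t, hv =>
      have h1 := En_chi1 hp0 hp n x t (by simp at hv; omega)
      rw [h0, h1]
lemma tupleStep_congr (hp : p ≤ 1) :
    ∀ u u' : List Bool, u.length = u'.length →
      tupleStep (zeta p hp) u = tupleStep (zeta p hp) u' := by
  intro u
  induction u with
  | nil => intro u' h; cases u' with
      | nil => rfl
      | cons a t => simp at h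
  | cons a t ih =>
      intro u' h
      cases u' with
      | nil => simp at h
      | cons a' t' =>
          simp only [List.length_cons, Nat.succ.injEq] at h
          show (zeta p hp a).bind _ = (zeta p hp a').bind _
          have hz : zeta p hp a = zeta p hp a' := rfl
          rw [hz, ih t' h]

lemma inducedMean_eval (hp0 : 0 ≤ p) (hp : p ≤ 1) (n : ℕ) (hn : 1 ≤ n) (v : List Bool)
    (hv : v.length = n) :
    inducedMean (zeta p hp) v (List.replicate n false) = W0 p v + W1 p v := by
  have key : (∑' ws : List (List Bool),
      (Bn (p := p) hp n) ws * (indCount v ws : ℝ≥0∞))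
      = ENNReal.ofReal (W0 p v) + ENNReal.ofReal (W1 p v) := En_indCount hp0 hp n hn v hv
  have h2 : inducedMean (zeta p hp) v (List.replicate n false)
      = (∑' ws : List (List Bool), (Bn (p := p) hp n) ws * (indCount v ws : ℝ≥0∞)).toReal := by
    rw [ENNReal.tsum_toReal_eq (fun ws => ENNReal.mul_ne_top (PMF.apply_ne_top _ _)
      (ENNReal.natCast_ne_top _))]
    rw [inducedMean]
    refine tsum_congr fun ws => ?_
    rw [ENNReal.toReal_mul, ENNReal.toReal_natCast]
    rfl
  rw [h2, key, ENNReal.toReal_add ENNReal.ofReal_ne_top ENNReal.ofReal_ne_top,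
    ENNReal.toReal_ofReal (W0_nonneg hp0 hp v), ENNReal.toReal_ofReal (W1_nonneg hp0 hp v)]

lemma join_cons' (a : List Bool) (l : List (List Bool)) : (a :: l).flatten = a ++ l.flatten := rfl

lemma join_append' (l1 l2 : List (List Bool)) : (l1 ++ l2).flatten = l1.flatten ++ l2.flatten :=
  List.flatten_append

lemma mem_supp_zeta (hp0 : 0 < p) (hp1 : p < 1) (hp : p ≤ 1) (b : Bool) (w : List Bool)
    (hw : w = [false, true] ∨ w = [true, false]) : w ∈ (zeta p hp b).support := by
  rw [zeta, PMF.support_map]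
  rcases hw with h | h
  · refine ⟨true, ?_, by simp [h]⟩
    simp only [PMF.mem_support_iff, PMF.bernoulli_apply, cond]
    exact (ENNReal.ofReal_pos.mpr hp0).ne'
  · refine ⟨false, ?_, by simp [h]⟩
    simp only [PMF.mem_support_iff, PMF.bernoulli_apply, cond]
    rw [ENNReal.coe_ne_zero, ne_eq, tsub_eq_zero_iff_le, not_le, Real.toNNReal_lt_one]
    exact hp1

lemma mem_supp_step (hp0 : 0 < p) (hp1 : p < 1) (hp : p ≤ 1) :
    ∀ (u : List Bool) (bs : List (List Bool)), bs.length = u.length →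
      (∀ b ∈ bs, b = [false, true] ∨ b = [true, false]) →
      bs.flatten ∈ (stepPMF (zeta p hp) u).support := by
  intro u
  induction u with
  | nil =>
      intro bs hlen _
      rw [List.length_nil, List.length_eq_zero_iff] at hlen
      subst hlen
      simp [stepPMF, PMF.support_pure]
  | cons a t ih =>
      intro bs hlen hbl
      cases bs with
      | nil => simp at hlen
      | cons b bs' =>
          show _ ∈ ((zeta p hp a).bind _).support
          rw [PMF.mem_support_bind_iff]
          refine ⟨b, mem_supp_zeta hp0 hp1 hp a b (hbl b (List.mem_cons_self)), ?_⟩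
          rw [PMF.support_map]
          refine ⟨bs'.flatten, ih bs' (by simpa using hlen) (fun x hx => hbl x (List.mem_cons_of_mem b hx)), ?_⟩
          simp [List.flatten_cons]

lemma len_join_blocks : ∀ bs : List (List Bool),
    (∀ b ∈ bs, b = [false, true] ∨ b = [true, false]) → bs.flatten.length = 2 * bs.length := by
  intro bs
  induction bs with
  | nil => simp
  | cons b bs' ih =>
      intro hbl
      rw [join_cons', List.length_append, ih (fun x hx => hbl x (List.mem_cons_of_mem b hx))]
      have : b.length = 2 := by
        rcases hbl b (List.mem_cons_self) with h | h <;> simp [h]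
      rw [this, List.length_cons]
      ring

lemma mem_supp_iter (hp0 : 0 < p) (hp1 : p < 1) (hp : p ≤ 1) :
    ∀ (m : ℕ) (bs : List (List Bool)), bs.length = 2 ^ m →
      (∀ b ∈ bs, b = [false, true] ∨ b = [true, false]) →
      bs.flatten ∈ (iterPMF (zeta p hp) (m + 1) false).support := by
  intro m
  induction m with
  | zero =>
      intro bs hlen hbl
      show _ ∈ ((iterPMF (zeta p hp) 0 false).bind _).support
      rw [PMF.mem_support_bind_iff]
      refine ⟨[false], by simp [iterPMF, PMF.support_pure], ?_⟩
      exact mem_supp_step hp0 hp1 hp [false] bs (by simpa using hlen) hbl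
  | succ m ih =>
      intro bs hlen hbl
      show _ ∈ ((iterPMF (zeta p hp) (m + 1) false).bind _).support
      rw [PMF.mem_support_bind_iff]
      set u := (List.replicate (2 ^ m) ([false, true] : List Bool)).flatten with hu
      have hublocks : ∀ b ∈ List.replicate (2 ^ m) ([false, true] : List Bool),
          b = [false, true] ∨ b = [true, false] := by
        intro b hb
        left
        exact (List.eq_of_mem_replicate hb)
      refine ⟨u, ih _ (by simp) hublocks, ?_⟩
      refine mem_supp_step hp0 hp1 hp u bs ?_ hbl
      rw [hu, len_join_blocks _ hublocks, List.length_replicate, hlen]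
      ring

noncomputable def blocks0 : List Bool → List (List Bool)
  | [] => []
  | [x] => [[x, !x]]
  | x :: y :: t => [x, y] :: blocks0 t

lemma blocks0_blocks (hp0 : 0 < p) (hp1 : p < 1) :
    ∀ v : List Bool, 0 < W0 p v → ∀ b ∈ blocks0 v, b = [false, true] ∨ b = [true, false]
  | [] => by simp [blocks0]
  | [x] => by
      intro _ b hb
      rw [blocks0] at hb
      simp only [List.mem_singleton] at hb
      subst hb
      cases x
      · left; rfl
      · right; rfl
  | x :: y :: t => by
      intro hpos b hb
      rw [W0] at hpos
      have h2 : 0 < w2 p x y ∧ 0 < W0 p t := by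
        constructor
        · rcases lt_or_eq_of_le (w2_nonneg hp0.le hp1.le x y) with h | h
          · exact h
          · exfalso; rw [← h, zero_mul] at hpos; exact lt_irrefl 0 hpos
        · rcases lt_or_eq_of_le (W0_nonneg hp0.le hp1.le t) with h | h
          · exact h
          · exfalso; rw [← h, mul_zero] at hpos; exact lt_irrefl 0 hpos
      have hxy : x ≠ y := by
        intro h
        rw [w2, if_pos h] at h2
        exact lt_irrefl 0 h2.1
      rw [blocks0] at hb
      rcases List.mem_cons.mp hb with h | h
      · subst h
        cases x <;> cases y <;> simp_all
      · exact blocks0_blocks hp0 hp1 t h2.2 b h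

lemma blocks0_prefix : ∀ v : List Bool, v <+: (blocks0 v).flatten
  | [] => List.nil_prefix
  | [x] => ⟨[!x], rfl⟩
  | x :: y :: t => by
      obtain ⟨r, hr⟩ := blocks0_prefix t
      exact ⟨r, by simp [blocks0, List.flatten_cons, hr]⟩

lemma legal_of_infix_blocks (hp0 : 0 < p) (hp1 : p < 1) (hp : p ≤ 1)
    (v : List Bool) (bs : List (List Bool))
    (hbl : ∀ b ∈ bs, b = [false, true] ∨ b = [true, false]) (hinf : v <:+: bs.flatten) :
    Legal (zeta p hp) v := by
  set k := bs.length with hk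
  have hkle : k ≤ 2 ^ k := (Nat.lt_two_pow_self (n := k)).le
  set bs' := bs ++ List.replicate (2 ^ k - k) ([false, true] : List Bool) with hbs'
  have hlen : bs'.length = 2 ^ k := by
    rw [hbs', List.length_append, List.length_replicate, ← hk]
    omega
  have hbl' : ∀ b ∈ bs', b = [false, true] ∨ b = [true, false] := by
    intro b hb
    rcases List.mem_append.mp hb with h | h
    · exact hbl b h
    · left; exact List.eq_of_mem_replicate h
  refine ⟨k + 1, false, bs'.flatten, mem_supp_iter hp0 hp1 hp k bs' hlen hbl', ?_⟩
  refine hinf.trans ?_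
  rw [hbs', join_append']
  exact (List.prefix_append _ _).isInfix

lemma legal_of_pos (hp0 : 0 < p) (hp1 : p < 1) (hp : p ≤ 1) (v : List Bool)
    (hpos : 0 < W0 p v + W1 p v) : Legal (zeta p hp) v := by
  have h0 := W0_nonneg hp0.le hp1.le v
  have h1 := W1_nonneg hp0.le hp1.le v
  cases v with
  | nil =>
      refine ⟨0, false, [false], by simp [iterPMF, PMF.support_pure], ?_⟩
      exact List.nil_infix
  | cons x t =>
      rcases lt_or_ge 0 (W0 p (x :: t)) with hW | hW
      · exact legal_of_infix_blocks hp0 hp1 hp _ (blocks0 (x :: t))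
          (blocks0_blocks hp0 hp1 _ hW) (blocks0_prefix (x :: t)).isInfix
      · have hW1 : 0 < W1 p (x :: t) := by
          have : W0 p (x :: t) = 0 := le_antisymm hW h0
          rw [this, zero_add] at hpos
          exact hpos
        rw [W1] at hW1
        have hW0t : 0 < W0 p t := by
          rcases lt_or_eq_of_le (W0_nonneg hp0.le hp1.le t) with h | h
          · exact h
          · exfalso; rw [← h, mul_zero] at hW1; exact lt_irrefl 0 hW1
        refine legal_of_infix_blocks hp0 hp1 hp (x :: t) ([!x, x] :: blocks0 t) ?_ ?_
        · intro b hb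
          rcases List.mem_cons.mp hb with h | h
          · subst h; cases x
            · right; rfl
            · left; rfl
          · exact blocks0_blocks hp0 hp1 t hW0t b h
        · rw [join_cons']
          obtain ⟨r, hr⟩ := blocks0_prefix t
          refine List.infix_cons ?_
          have hpre : x :: t <+: x :: (blocks0 t).flatten := ⟨r, by simp [hr]⟩
          exact hpre.isInfix

/-! ### Sums over all words of length `n` -/

def Sn : ℕ → Finset (List Bool)
  | 0 => {[]}
  | n + 1 => ((Sn n).image (List.cons false)) ∪ ((Sn n).image (List.cons true))

lemma mem_Sn : ∀ (n : ℕ) (v : List Bool), v ∈ Sn n ↔ v.length = n := by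
  intro n
  induction n with
  | zero => intro v; simp [Sn, List.length_eq_zero_iff]
  | succ n ih =>
      intro v
      rw [Sn]
      simp only [Finset.mem_union, Finset.mem_image]
      constructor
      · rintro (⟨t, ht, rfl⟩ | ⟨t, ht, rfl⟩) <;> simp [(ih t).mp ht]
      · intro hv
        cases v with
        | nil => simp at hv
        | cons x t =>
            have : t.length = n := by simpa using hv
            cases x
            · exact Or.inl ⟨t, (ih t).mpr this, rfl⟩
            · exact Or.inr ⟨t, (ih t).mpr this, rfl⟩

lemma sum_Sn_succ (n : ℕ) (f : List Bool → ℝ) :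
    ∑ v ∈ Sn (n + 1), f v
      = (∑ t ∈ Sn n, f (false :: t)) + ∑ t ∈ Sn n, f (true :: t) := by
  rw [Sn]
  rw [Finset.sum_union]
  · rw [Finset.sum_image (by intro a _ b _ h; simpa using h),
      Finset.sum_image (by intro a _ b _ h; simpa using h)]
  · rw [Finset.disjoint_left]
    rintro v hv hv'
    simp only [Finset.mem_image] at hv hv'
    obtain ⟨t, _, rfl⟩ := hv
    obtain ⟨t', _, h⟩ := hv'
    simp at h

/-- `F x = x * log x`. -/
noncomputable def Fent (x : ℝ) : ℝ := x * Real.log x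

lemma Fent_zero : Fent 0 = 0 := by simp [Fent]

lemma Fent_mul (a b : ℝ) (ha : 0 ≤ a) (hb : 0 ≤ b) :
    Fent (a * b) = b * Fent a + a * Fent b := by
  rcases eq_or_lt_of_le ha with h | ha
  · simp [← h, Fent]
  rcases eq_or_lt_of_le hb with h | hb
  · simp [← h, Fent]
  rw [Fent, Fent, Fent, Real.log_mul ha.ne' hb.ne']
  ring

/-- Entropy-type sums of `W0` and `W1`, and mass sums. -/
lemma sum_W0 (hp0 : 0 < p) (hp1 : p < 1) : ∀ n : ℕ,
    (∑ v ∈ Sn n, W0 p v) = 1 ∧ (∑ v ∈ Sn (n + 1), W0 p v) = 1 := by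
  intro n
  induction n with
  | zero =>
      constructor
      · simp [Sn, W0]
      · rw [sum_Sn_succ]
        simp [Sn, W0, wA]
  | succ n ih =>
      refine ⟨ih.2, ?_⟩
      rw [sum_Sn_succ, sum_Sn_succ, sum_Sn_succ]
      have key : ∀ x y : Bool, ∑ t ∈ Sn n, W0 p (x :: y :: t) = w2 p x y := by
        intro x y
        have : ∀ t : List Bool, W0 p (x :: y :: t) = w2 p x y * W0 p t := fun t => rfl
        simp only [this, ← Finset.mul_sum, ih.1, mul_one]
      rw [key, key, key, key]
      simp [w2, wA]

lemma sum_W1 (hp0 : 0 < p) (hp1 : p < 1) (n : ℕ) :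
    (∑ v ∈ Sn (n + 1), W1 p v) = 1 := by
  rw [sum_Sn_succ]
  have key : ∀ x : Bool, ∑ t ∈ Sn n, W1 p (x :: t) = wB p x := by
    intro x
    have : ∀ t : List Bool, W1 p (x :: t) = wB p x * W0 p t := fun t => rfl
    simp only [this, ← Finset.mul_sum, (sum_W0 hp0 hp1 n).1, mul_one]
  rw [key, key]
  simp [wB]

/-- Shannon-type quantity `Hc = p log p + (1-p) log (1-p)` (note: negative of entropy). -/
noncomputable def Hc (p : ℝ) : ℝ := Fent p + Fent (1 - p)

noncomputable def phi0 (p : ℝ) (n : ℕ) : ℝ := ∑ v ∈ Sn n, Fent (W0 p v)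
noncomputable def phi1 (p : ℝ) (n : ℕ) : ℝ := ∑ v ∈ Sn n, Fent (W1 p v)

lemma phi0_zero : phi0 p 0 = 0 := by simp [phi0, Sn, W0, Fent]

lemma phi0_one : phi0 p 1 = Hc p := by
  rw [phi0, sum_Sn_succ]
  simp [Sn, W0, wA, Hc]

lemma phi0_succ_succ (hp0 : 0 < p) (hp1 : p < 1) (n : ℕ) :
    phi0 p (n + 2) = phi0 p n + Hc p := by
  rw [phi0, sum_Sn_succ, sum_Sn_succ, sum_Sn_succ]
  have key : ∀ x y : Bool, ∑ t ∈ Sn n, Fent (W0 p (x :: y :: t))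
      = W0 p ([x, y]) * phi0 p n + Fent (w2 p x y) := by
    intro x y
    have h1 : ∀ t : List Bool, Fent (W0 p (x :: y :: t))
        = W0 p t * Fent (w2 p x y) + w2 p x y * Fent (W0 p t) := by
      intro t
      have : W0 p (x :: y :: t) = w2 p x y * W0 p t := rfl
      rw [this, Fent_mul _ _ (w2_nonneg hp0.le hp1.le x y) (W0_nonneg hp0.le hp1.le t)]
    simp only [h1, Finset.sum_add_distrib, ← Finset.sum_mul, ← Finset.mul_sum,
      (sum_W0 hp0 hp1 n).1, one_mul]
    have : W0 p [x, y] = w2 p x y := by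
      show w2 p x y * W0 p [] = w2 p x y
      rw [W0, mul_one]
    rw [this, phi0]
    ring
  rw [key, key, key, key]
  have hW : ∀ x y : Bool, W0 p [x, y] = w2 p x y := by
    intro x y
    show w2 p x y * W0 p [] = w2 p x y
    rw [W0, mul_one]
  simp only [hW]
  simp [w2, wA, Hc, Fent_zero]
  ring

lemma phi0_pair (hp0 : 0 < p) (hp1 : p < 1) : ∀ n : ℕ,
    phi0 p (n + 1) + phi0 p n = (n + 1 : ℝ) * Hc p := by
  intro n
  induction n with
  | zero => rw [phi0_zero, phi0_one]; norm_num
  | succ n ih =>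
      rw [phi0_succ_succ hp0 hp1 n]
      push_cast
      push_cast at ih
      linarith

lemma phi1_succ (hp0 : 0 < p) (hp1 : p < 1) (n : ℕ) :
    phi1 p (n + 1) = Hc p + phi0 p n := by
  rw [phi1, sum_Sn_succ]
  have key : ∀ x : Bool, ∑ t ∈ Sn n, Fent (W1 p (x :: t))
      = Fent (wB p x) + wB p x * phi0 p n := by
    intro x
    have h1 : ∀ t : List Bool, Fent (W1 p (x :: t))
        = W0 p t * Fent (wB p x) + wB p x * Fent (W0 p t) := by
      intro t
      have : W1 p (x :: t) = wB p x * W0 p t := rfl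
      rw [this, Fent_mul _ _ (wB_nonneg hp0.le hp1.le x) (W0_nonneg hp0.le hp1.le t)]
    simp only [h1, Finset.sum_add_distrib, ← Finset.sum_mul, ← Finset.mul_sum,
      (sum_W0 hp0 hp1 n).1, one_mul, phi0]
  rw [key, key]
  simp [wB, Hc]
  ring

lemma Fent_superadd {a b : ℝ} (ha : 0 ≤ a) (hb : 0 ≤ b) :
    Fent a + Fent b ≤ Fent (a + b) := by
  rcases eq_or_lt_of_le ha with h | ha'
  · simp [← h, Fent_zero]
  rcases eq_or_lt_of_le hb with h | hb'
  · simp [← h, Fent_zero]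
  have h1 : Fent a ≤ a * Real.log (a + b) := by
    rw [Fent]
    exact mul_le_mul_of_nonneg_left
      (Real.log_le_log ha' (by linarith)) ha
  have h2 : Fent b ≤ b * Real.log (a + b) := by
    rw [Fent]
    exact mul_le_mul_of_nonneg_left
      (Real.log_le_log hb' (by linarith)) hb
  have hgoal : a * Real.log (a + b) + b * Real.log (a + b) = Fent (a + b) := by
    rw [Fent]; ring
  linarith

lemma Fent_subadd {a b : ℝ} (ha : 0 ≤ a) (hb : 0 ≤ b) :
    Fent (a + b) ≤ Fent a + Fent b + (a + b) * Real.log 2 := by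
  have hlog2 : 0 ≤ Real.log 2 := Real.log_nonneg (by norm_num)
  rcases eq_or_lt_of_le ha with h | ha'
  · rw [← h]
    simp only [Fent_zero, zero_add]
    linarith [mul_nonneg hb hlog2]
  rcases eq_or_lt_of_le hb with h | hb'
  · rw [← h]
    simp only [Fent_zero, add_zero]
    linarith [mul_nonneg ha hlog2]
  have hab : 0 < a + b := by linarith
  have h1 : Real.log ((a + b) / (2 * a)) ≤ (a + b) / (2 * a) - 1 :=
    Real.log_le_sub_one_of_pos (by positivity)
  have h2 : Real.log ((a + b) / (2 * b)) ≤ (a + b) / (2 * b) - 1 :=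
    Real.log_le_sub_one_of_pos (by positivity)
  have e1 : Real.log ((a + b) / (2 * a)) = Real.log (a + b) - Real.log 2 - Real.log a := by
    rw [Real.log_div hab.ne' (by positivity), Real.log_mul (by norm_num) ha'.ne']
    ring
  have e2 : Real.log ((a + b) / (2 * b)) = Real.log (a + b) - Real.log 2 - Real.log b := by
    rw [Real.log_div hab.ne' (by positivity), Real.log_mul (by norm_num) hb'.ne']
    ring
  rw [e1] at h1
  rw [e2] at h2
  have h1' := mul_le_mul_of_nonneg_left h1 ha
  have h2' := mul_le_mul_of_nonneg_left h2 hb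
  have r1 : a * ((a + b) / (2 * a) - 1) = (a + b) / 2 - a := by
    field_simp
  have r2 : b * ((a + b) / (2 * b) - 1) = (a + b) / 2 - b := by
    field_simp
  rw [r1] at h1'
  rw [r2] at h2'
  simp only [Fent]
  nlinarith

lemma Fent_half (x : ℝ) (hx : 0 ≤ x) :
    Fent (x / 2) = Fent x / 2 - x / 2 * Real.log 2 := by
  rw [show x / 2 = x * (1 / 2) by ring,
    Fent_mul x (1 / 2) hx (by norm_num)]
  have : Fent (1 / 2) = -(Real.log 2) / 2 := by
    rw [Fent, show (1 : ℝ) / 2 = 2⁻¹ by norm_num, Real.log_inv]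
    ring
  rw [this, Fent]
  ring

noncomputable def SumH (p : ℝ) (n : ℕ) : ℝ := ∑ v ∈ Sn n, Fent ((W0 p v + W1 p v) / 2)

lemma SumH_eq (hp0 : 0 < p) (hp1 : p < 1) (m : ℕ) :
    ∃ Γ : ℝ, 0 ≤ Γ ∧ Γ ≤ Real.log 2 ∧
      SumH p (m + 1) = ((m + 2 : ℝ) * Hc p) / 2 - Real.log 2 + Γ := by
  set n := m + 1 with hn
  refine ⟨∑ v ∈ Sn n, (Fent ((W0 p v + W1 p v) / 2)
      - Fent (W0 p v / 2) - Fent (W1 p v / 2)), ?_, ?_, ?_⟩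
  · refine Finset.sum_nonneg fun v _ => ?_
    have h := Fent_superadd (a := W0 p v / 2) (b := W1 p v / 2)
      (by linarith [W0_nonneg hp0.le hp1.le v]) (by linarith [W1_nonneg hp0.le hp1.le v])
    rw [show W0 p v / 2 + W1 p v / 2 = (W0 p v + W1 p v) / 2 by ring] at h
    linarith
  · have hbd : ∀ v ∈ Sn n, Fent ((W0 p v + W1 p v) / 2)
        - Fent (W0 p v / 2) - Fent (W1 p v / 2)
        ≤ (W0 p v / 2 + W1 p v / 2) * Real.log 2 := by
      intro v _
      have h := Fent_subadd (a := W0 p v / 2) (b := W1 p v / 2)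
        (by linarith [W0_nonneg hp0.le hp1.le v]) (by linarith [W1_nonneg hp0.le hp1.le v])
      rw [show W0 p v / 2 + W1 p v / 2 = (W0 p v + W1 p v) / 2 by ring] at h
      rw [show W0 p v / 2 + W1 p v / 2 = (W0 p v + W1 p v) / 2 by ring]
      linarith
    calc _ ≤ ∑ v ∈ Sn n, (W0 p v / 2 + W1 p v / 2) * Real.log 2 :=
            Finset.sum_le_sum hbd
      _ = Real.log 2 := by
          simp only [add_mul, Finset.sum_add_distrib, div_mul_eq_mul_div,
            ← Finset.sum_div, ← Finset.sum_mul]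
          rw [(sum_W0 hp0 hp1 m).2, sum_W1 hp0 hp1 m]
          ring
  · have hsplit : SumH p n = (∑ v ∈ Sn n, Fent (W0 p v / 2))
        + (∑ v ∈ Sn n, Fent (W1 p v / 2))
        + ∑ v ∈ Sn n, (Fent ((W0 p v + W1 p v) / 2)
            - Fent (W0 p v / 2) - Fent (W1 p v / 2)) := by
      rw [SumH, ← Finset.sum_add_distrib, ← Finset.sum_add_distrib]
      refine Finset.sum_congr rfl fun v _ => ?_
      ring
    have h0 : (∑ v ∈ Sn n, Fent (W0 p v / 2)) = phi0 p n / 2 - Real.log 2 / 2 := by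
      have : ∀ v ∈ Sn n, Fent (W0 p v / 2)
          = Fent (W0 p v) / 2 - W0 p v / 2 * Real.log 2 :=
        fun v _ => Fent_half _ (W0_nonneg hp0.le hp1.le v)
      rw [Finset.sum_congr rfl this, Finset.sum_sub_distrib, ← Finset.sum_div,
        ← phi0]
      simp only [div_mul_eq_mul_div, ← Finset.sum_div, ← Finset.sum_mul]
      rw [(sum_W0 hp0 hp1 m).2]
      ring
    have h1 : (∑ v ∈ Sn n, Fent (W1 p v / 2)) = phi1 p n / 2 - Real.log 2 / 2 := by
      have : ∀ v ∈ Sn n, Fent (W1 p v / 2)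
          = Fent (W1 p v) / 2 - W1 p v / 2 * Real.log 2 :=
        fun v _ => Fent_half _ (W1_nonneg hp0.le hp1.le v)
      rw [Finset.sum_congr rfl this, Finset.sum_sub_distrib, ← Finset.sum_div,
        ← phi1]
      simp only [div_mul_eq_mul_div, ← Finset.sum_div, ← Finset.sum_mul]
      rw [sum_W1 hp0 hp1 m]
      ring
    have hphi : phi0 p n + phi1 p n = (m + 2 : ℝ) * Hc p := by
      rw [hn, phi1_succ hp0 hp1 m]
      have := phi0_pair hp0 hp1 m
      push_cast at this ⊢
      linarith
    rw [hsplit, h0, h1]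
    rw [show phi0 p n / 2 - Real.log 2 / 2 + (phi1 p n / 2 - Real.log 2 / 2)
        = (phi0 p n + phi1 p n) / 2 - Real.log 2 by ring, hphi]

lemma inducedMean_congr (hp : p ≤ 1) (v u u' : List Bool) (h : u.length = u'.length) :
    inducedMean (zeta p hp) v u = inducedMean (zeta p hp) v u' := by
  rw [inducedMean, inducedMean, tupleStep_congr hp u u' h]

lemma Fent_ne_zero_pos {x : ℝ} (hx : 0 ≤ x) (h : Fent x ≠ 0) : 0 < x := by
  rcases eq_or_lt_of_le hx with h' | h'
  · exact absurd (by rw [← h', Fent_zero]) h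
  · exact h'


end W
end Aux

open Filter in
/-- the metric entropy of the frequency measure `μ` of the random
substitution `ζ : a, b ↦ {ab (prob p), ba (prob 1-p)}` is
`h_μ = -(1/2)(p log p + (1-p) log(1-p))`.  The frequency measure assigns to the
cylinder of a legal word `w` of length `n` the entry `R w` of the normalized positive
right Perron eigenvector (eigenvalue `2`) of the induced substitution matrix, and
`h_μ = lim_n -(1/n) ∑_{w ∈ L^n} μ([w]) log μ([w])`. -/
theorem stmt15 (p : ℝ) (hp0 : 0 < p) (hp1 : p < 1)
    (R : List Bool → ℝ)
    (hRpos : ∀ w : List Bool, Legal (zeta p hp1.le) w → 0 < R w)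
    (hRnorm : ∀ n : ℕ, 1 ≤ n →
      ∑' w : {w : List Bool // Legal (zeta p hp1.le) w ∧ w.length = n}, R w.val = 1)
    (hReig : ∀ n : ℕ, 1 ≤ n → ∀ v : List Bool,
      Legal (zeta p hp1.le) v → v.length = n →
      ∑' u : {u : List Bool // Legal (zeta p hp1.le) u ∧ u.length = n},
        inducedMean (zeta p hp1.le) v u.val * R u.val = 2 * R v) :
    Filter.Tendsto
      (fun n : ℕ => -(1 / (n : ℝ)) *
        ∑' w : {w : List Bool // Legal (zeta p hp1.le) w ∧ w.length = n},
          R w.val * Real.log (R w.val))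
      Filter.atTop
      (nhds (-(1 / 2) * (p * Real.log p + (1 - p) * Real.log (1 - p)))) := by
  classical
  set ζ := zeta p hp1.le with hζ
  -- Step 1: identify R on legal words.
  have hR_eq : ∀ (n : ℕ), 1 ≤ n → ∀ v : List Bool, Legal ζ v → v.length = n →
      R v = (W0 p v + W1 p v) / 2 := by
    intro n hn v hleg hlen
    have heig := hReig n hn v hleg hlen
    have hconst : ∀ u : {u : List Bool // Legal ζ u ∧ u.length = n},
        inducedMean ζ v u.val * R u.val
          = inducedMean ζ v (List.replicate n false) * R u.val := by
      intro u
      rw [inducedMean_congr hp1.le v u.val (List.replicate n false)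
        (by rw [u.2.2, List.length_replicate])]
    rw [tsum_congr hconst, tsum_mul_left, hRnorm n hn, mul_one,
      inducedMean_eval hp0.le hp1.le n hn v hlen] at heig
    linarith
  -- Step 2: identify the entropy sums.
  have hT : ∀ m : ℕ,
      (∑' w : {w : List Bool // Legal ζ w ∧ w.length = m + 1},
        R w.val * Real.log (R w.val)) = SumH p (m + 1) := by
    intro m
    set n := m + 1 with hn
    have hfin : {w : List Bool | Legal ζ w ∧ w.length = n}.Finite :=
      (List.finite_length_eq Bool n).subset (fun w hw => hw.2)
    haveI : Finite {w : List Bool // Legal ζ w ∧ w.length = n} := by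
      haveI := hfin.to_subtype
      exact Finite.of_equiv ↥{w : List Bool | Legal ζ w ∧ w.length = n}
        (Equiv.subtypeEquivRight fun w => Iff.rfl)
    haveI : Fintype {w : List Bool // Legal ζ w ∧ w.length = n} := Fintype.ofFinite _
    rw [tsum_fintype]
    have hmem : ∀ w : List Bool, w ∈ (Sn n).filter (fun v => Legal ζ v)
        ↔ Legal ζ w ∧ w.length = n := by
      intro w
      rw [Finset.mem_filter, mem_Sn]
      tauto
    rw [← Finset.sum_subtype _ hmem (fun w => R w * Real.log (R w))]
    have hcongr : ∀ v ∈ (Sn n).filter (fun v => Legal ζ v),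
        R v * Real.log (R v) = Fent ((W0 p v + W1 p v) / 2) := by
      intro v hv
      rw [Finset.mem_filter, mem_Sn] at hv
      rw [hR_eq n (by omega) v hv.2 hv.1, Fent]
    rw [Finset.sum_congr rfl hcongr]
    rw [Finset.sum_filter_of_ne, SumH]
    intro v hv hne
    have hpos : 0 < W0 p v + W1 p v := by
      have := Fent_ne_zero_pos (x := (W0 p v + W1 p v) / 2)
        (by linarith [W0_nonneg hp0.le hp1.le v, W1_nonneg hp0.le hp1.le v]) hne
      linarith
    exact legal_of_pos hp0 hp1 hp1.le v hpos
  -- Step 3: the limit.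
  have hL : -(1 / 2) * (p * Real.log p + (1 - p) * Real.log (1 - p)) = -(Hc p) / 2 := by
    rw [Hc, Fent, Fent]
    ring
  rw [hL, ← tendsto_sub_nhds_zero_iff]
  have hlog2 : 0 ≤ Real.log 2 := Real.log_nonneg (by norm_num)
  set C := |Hc p| / 2 + 2 * Real.log 2 with hC
  refine squeeze_zero_norm' ?_ (tendsto_const_div_atTop_nhds_zero_nat C)
  filter_upwards [Filter.eventually_ge_atTop 1] with n hn
  obtain ⟨m, rfl⟩ : ∃ m, n = m + 1 := ⟨n - 1, by omega⟩
  obtain ⟨Γ, hΓ0, hΓ2, hSum⟩ := SumH_eq hp0 hp1 m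
  rw [hT m, hSum]
  have hnpos : (0 : ℝ) < (m + 1 : ℕ) := by positivity
  have hne : ((m + 1 : ℕ) : ℝ) ≠ 0 := hnpos.ne'
  have hexpand : -(1 / ((m + 1 : ℕ) : ℝ)) * ((m + 2 : ℝ) * Hc p / 2 - Real.log 2 + Γ)
      - -(Hc p) / 2 = (-(Hc p) / 2 + Real.log 2 - Γ) / ((m + 1 : ℕ) : ℝ) := by
    push_cast
    field_simp
    ring
  rw [hexpand, norm_div, Real.norm_natCast]
  refine (div_le_div_iff_of_pos_right hnpos).mpr ?_
  rw [Real.norm_eq_abs]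
  have h1 : |(-(Hc p) / 2 + Real.log 2 - Γ)| ≤ |(-(Hc p) / 2)| + |Real.log 2 - Γ| := by
    rw [show -(Hc p) / 2 + Real.log 2 - Γ = (-(Hc p) / 2) + (Real.log 2 - Γ) by ring]
    exact abs_add_le _ _
  have h2 : |(-(Hc p) / 2)| = |Hc p| / 2 := by
    rw [show -(Hc p) / 2 = -(Hc p / 2) by ring, abs_neg, abs_div, abs_two]
  have h3 : |Real.log 2 - Γ| ≤ Real.log 2 := abs_le.mpr ⟨by linarith, by linarith⟩
  rw [hC]
  linarith


end RS
end

section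
/- Let X be a subshift with topological entropy h(X), \mu a shift-invariant Borel probability measure on X, and suppose there exist constants c_1, c_2 > 0 such that for infinitely many n and every legal word w of length n, c_1 / |\mathcal{L}^n| \le \mu([w]) \le c_2 / |\mathcal{L}^n|, where \mathcal{L}^n is the set of legal words of length n. Then the measure-theoretic entropy h_\mu equals h(X), so \mu is a measure of maximal entropy. -/
open Filter MeasureTheory

/-- A word `w` of length `n` appears in the subshift `X`. -/
def Appears {A : Type*} (X : Set (ℤ → A)) (n : ℕ) (w : Fin n → A) : Prop :=
  ∃ x ∈ X, ∃ k : ℤ, ∀ i : Fin n, x (k + i) = w i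

/-- The cylinder set of the word `w` (placed at positions `0, …, n-1`). -/
def Cyl {A : Type*} (n : ℕ) (w : Fin n → A) : Set (ℤ → A) :=
  {x | ∀ i : Fin n, x (i : ℤ) = w i}

lemma cyl_meas {A : Type*} [MeasurableSpace A] [MeasurableSingletonClass A]
    (n : ℕ) (w : Fin n → A) : MeasurableSet (Cyl n w) := by
  have : Cyl n w = ⋂ i : Fin n, (fun x : ℤ → A => x (i : ℤ)) ⁻¹' {w i} := by
    ext x; simp [Cyl]
  rw [this]
  exact MeasurableSet.iInter fun i => (measurable_pi_apply _) (measurableSet_singleton _)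

lemma sum_cyl {A : Type*} [Fintype A] [MeasurableSpace A] [MeasurableSingletonClass A]
    (μ : Measure (ℤ → A)) [IsProbabilityMeasure μ] (n : ℕ) :
    ∑ w : Fin n → A, μ (Cyl n w) = 1 := by
  classical
  have hdis : Pairwise (Function.onFun Disjoint (fun w : Fin n → A => Cyl n w)) := by
    intro w w' hww'
    rw [Function.onFun, Set.disjoint_left]
    intro x hx hx'
    exact hww' (funext fun i => (hx i).symm.trans (hx' i))
  have h := measure_iUnion hdis (fun w => cyl_meas n w) (μ := μ)
  have hu : (⋃ w : Fin n → A, Cyl n w) = Set.univ := by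
    ext x; simp only [Set.mem_iUnion, Set.mem_univ, iff_true]
    exact ⟨fun i => x i, fun i => rfl⟩
  rw [hu, measure_univ] at h
  rw [← tsum_fintype (L := SummationFilter.unconditional _)]
  exact h.symm

/-- if a shift-invariant measure on a subshift gives every legal word of
length `n` a measure comparable (with uniform constants) to `1/|L^n|` for infinitely
many `n`, then its measure-theoretic entropy equals the topological entropy, i.e. it
is a measure of maximal entropy. -/
theorem stmt17 {A : Type*} [Fintype A] [MeasurableSpace A] [MeasurableSingletonClass A]
    (X : Set (ℤ → A))
    (hXne : X.Nonempty)
    (hXinv : ∀ x ∈ X, (fun i : ℤ => x (i + 1)) ∈ X)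
    (μ : Measure (ℤ → A)) [IsProbabilityMeasure μ]
    (hshift : MeasurePreserving (fun (x : ℤ → A) (i : ℤ) => x (i + 1)) μ μ)
    (hsupp : ∀ (n : ℕ) (w : Fin n → A), ¬ Appears X n w → μ (Cyl n w) = 0)
    (htopval hμval : ℝ)
    (htop : Filter.Tendsto
      (fun n : ℕ => Real.log (Nat.card {w : Fin n → A // Appears X n w}) / n)
      Filter.atTop (nhds htopval))
    (hent : Filter.Tendsto
      (fun n : ℕ => -(1 / (n : ℝ)) *
        ∑' w : {w : Fin n → A // Appears X n w},
          (μ (Cyl n w.val)).toReal * Real.log ((μ (Cyl n w.val)).toReal))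
      Filter.atTop (nhds hμval))
    (hvar : hμval ≤ htopval)
    (hbound : ∃ c₁ c₂ : ℝ, 0 < c₁ ∧ 0 < c₂ ∧
      ∃ᶠ n : ℕ in Filter.atTop, ∀ w : Fin n → A, Appears X n w →
        ENNReal.ofReal (c₁ / (Nat.card {w' : Fin n → A // Appears X n w'})) ≤ μ (Cyl n w) ∧
        μ (Cyl n w) ≤ ENNReal.ofReal (c₂ / (Nat.card {w' : Fin n → A // Appears X n w'}))) :
    hμval = htopval := by
  classical
  obtain ⟨c₁, c₂, hc₁, hc₂, hfreq⟩ := hbound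
  -- abbreviations
  set N : ℕ → ℕ := fun n => Nat.card {w : Fin n → A // Appears X n w} with hN
  set S : ℕ → ℝ := fun n => -(1 / (n : ℝ)) *
      ∑' w : {w : Fin n → A // Appears X n w},
        (μ (Cyl n w.val)).toReal * Real.log ((μ (Cyl n w.val)).toReal) with hS
  -- each N n ≥ 1
  have hNpos : ∀ n, 1 ≤ N n := by
    intro n
    obtain ⟨x, hx⟩ := hXne
    have : Appears X n (fun i => x (i : ℤ)) := ⟨x, hx, 0, fun i => by simp⟩
    have : Nonempty {w : Fin n → A // Appears X n w} := ⟨⟨_, this⟩⟩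
    exact Nat.one_le_iff_ne_zero.mpr (Nat.card_ne_zero.mpr ⟨this, Finite.of_fintype _⟩)
  -- sum of toReal measures over appearing words is 1
  have hsum1 : ∀ n, ∑' w : {w : Fin n → A // Appears X n w},
      (μ (Cyl n w.val)).toReal = 1 := by
    intro n
    have h1 : ∑ w : Fin n → A, (μ (Cyl n w)).toReal = 1 := by
      rw [← ENNReal.toReal_sum (fun w _ => measure_ne_top μ _), sum_cyl μ n,
        ENNReal.toReal_one]
    have h2 : (∑' w : {w : Fin n → A // Appears X n w}, (μ (Cyl n w.val)).toReal)
        = ∑' w : Fin n → A, (μ (Cyl n w)).toReal := by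
      apply tsum_subtype_eq_of_support_subset
        (f := fun w : Fin n → A => (μ (Cyl n w)).toReal) (s := {w | Appears X n w})
      intro w hw
      by_contra h
      exact hw (by simp only [Function.mem_support, hsupp n w h, ENNReal.toReal_zero,
        ne_eq, not_true_eq_false] at *)
    rw [h2, tsum_fintype, h1]
  -- main bound along the frequent subsequence
  have key : ∃ᶠ n : ℕ in atTop,
      0 ≤ S n - Real.log (N n) / n + Real.log c₂ / n := by
    refine (hfreq.and_eventually (eventually_ge_atTop 1)).mono ?_
    rintro n ⟨hb, hn1⟩
    have hnpos : (0 : ℝ) < n := by exact_mod_cast hn1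
    have hNr : (0 : ℝ) < (N n : ℝ) := by exact_mod_cast hNpos n
    have hc2N : (0 : ℝ) < c₂ / N n := div_pos hc₂ hNr
    -- termwise: p log p ≤ p * log (c₂/N)
    have hterm : ∀ w : {w : Fin n → A // Appears X n w},
        (μ (Cyl n w.val)).toReal * Real.log ((μ (Cyl n w.val)).toReal)
          ≤ (μ (Cyl n w.val)).toReal * Real.log (c₂ / N n) := by
      intro w
      have hwp := hb w.val w.property
      have hub : (μ (Cyl n w.val)).toReal ≤ c₂ / N n :=
        ENNReal.toReal_le_of_le_ofReal hc2N.le hwp.2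
      have hlb : c₁ / N n ≤ (μ (Cyl n w.val)).toReal := by
        rw [← ENNReal.ofReal_le_iff_le_toReal (measure_ne_top μ _)]
        exact hwp.1
      have hppos : 0 < (μ (Cyl n w.val)).toReal :=
        lt_of_lt_of_le (div_pos hc₁ hNr) hlb
      exact mul_le_mul_of_nonneg_left (Real.log_le_log hppos hub) hppos.le
    have hsum : ∑' w : {w : Fin n → A // Appears X n w},
        (μ (Cyl n w.val)).toReal * Real.log ((μ (Cyl n w.val)).toReal)
          ≤ Real.log (c₂ / N n) := by
      calc ∑' w : {w : Fin n → A // Appears X n w},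
          (μ (Cyl n w.val)).toReal * Real.log ((μ (Cyl n w.val)).toReal)
          ≤ ∑' w : {w : Fin n → A // Appears X n w},
            (μ (Cyl n w.val)).toReal * Real.log (c₂ / N n) :=
            Summable.tsum_le_tsum hterm Summable.of_finite Summable.of_finite
        _ = (∑' w : {w : Fin n → A // Appears X n w},
            (μ (Cyl n w.val)).toReal) * Real.log (c₂ / N n) := tsum_mul_right
        _ = Real.log (c₂ / N n) := by rw [hsum1 n, one_mul]
    have hlogdiv : Real.log (c₂ / N n) = Real.log c₂ - Real.log (N n) :=
      Real.log_div (ne_of_gt hc₂) (ne_of_gt hNr)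
    have hineq : -(1 / (n : ℝ)) * Real.log (c₂ / N n) ≤ S n := by
      rw [hS]
      have h1n : 0 ≤ 1 / (n : ℝ) := by positivity
      nlinarith [hsum]
    rw [hlogdiv] at hineq
    have hsplit : -(1 / (n : ℝ)) * (Real.log c₂ - Real.log (N n))
        = Real.log (N n) / n - Real.log c₂ / n := by
      field_simp
      ring
    rw [hsplit] at hineq
    linarith
  -- take limits
  have hlim : Tendsto (fun n : ℕ => S n - Real.log (N n) / n + Real.log c₂ / n)
      atTop (nhds (hμval - htopval + 0)) :=
    ((hent.sub htop).add (tendsto_const_div_atTop_nhds_zero_nat _))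
  have h0 : 0 ≤ hμval - htopval + 0 := by
    by_contra h
    push_neg at h
    have hev : ∀ᶠ n : ℕ in atTop,
        S n - Real.log (N n) / n + Real.log c₂ / n < 0 :=
      hlim.eventually (gt_mem_nhds h)
    obtain ⟨n, hk, hl⟩ := (key.and_eventually hev).exists
    linarith
  linarith
end
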